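/- arXiv:2401.04894 — 4 statements merged into one kernel-verified Lean document; each statement's English description precedes it below -/
import Mathlib

section
/- Let r be a positive integer and let F be a graph with at least one edge such that no single vertex of F is incident to all edges of F (equivalently, F is not a subgraph of any star). Then ex(n, S_r, F) = (1/r! + o(1)) · ex_r(n, F) as n → ∞; that is, the ratio ex(n, S_r, F) / ex_r(n, F) tends to 1/r! as n tends to infinity. -/
open Finset

/-- Build a simple graph from an arbitrary relation by symmetrizing it and
removing loops. -/
def mkGraph {V : Type*} (r : V → V → Prop) : SimpleGraph V where
  Adj v w := v ≠ w ∧ (r v w ∨ r w v)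
  symm := ⟨fun _ _ h => ⟨h.1.symm, h.2.symm⟩⟩
  loopless := ⟨fun _ h => h.1 rfl⟩

/-- `G` contains a copy of `F` as a (not necessarily induced) subgraph. -/
def Contains {α β : Type*} (F : SimpleGraph α) (G : SimpleGraph β) : Prop :=
  ∃ f : α ↪ β, ∀ a b, F.Adj a b → G.Adj (f a) (f b)

/-- `e_r(G)`, the sum of the `r`-th powers of the degrees of `G`. -/
noncomputable def degPow {β : Type*} [Fintype β] (G : SimpleGraph β) (r : ℕ) : ℕ :=
  ∑ v, ((G.neighborSet v).ncard) ^ r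

/-- `N(S_p, G) = ∑_v C(d(v), p)`, the number of copies of the star `S_p` in `G`. -/
noncomputable def starCount {β : Type*} [Fintype β] (G : SimpleGraph β) (p : ℕ) : ℕ :=
  ∑ v, ((G.neighborSet v).ncard).choose p

/-- The number of edges of `G`. -/
noncomputable def edgeCount {β : Type*} (G : SimpleGraph β) : ℕ :=
  G.edgeSet.ncard

/-- `ex_r(n, F)`: the largest value of `e_r(G)` over `F`-free graphs `G` on `n` vertices. -/
noncomputable def exDegPow {α : Type*} (n r : ℕ) (F : SimpleGraph α) : ℕ :=
  sSup {m | ∃ G : SimpleGraph (Fin n), ¬ Contains F G ∧ degPow G r = m}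

/-- `ex(n, S_p, F)`: the largest number of copies of the star `S_p` in an `F`-free
graph on `n` vertices. -/
noncomputable def exStarCount {α : Type*} (n p : ℕ) (F : SimpleGraph α) : ℕ :=
  sSup {m | ∃ G : SimpleGraph (Fin n), ¬ Contains F G ∧ starCount G p = m}



set_option linter.unusedSectionVars false
set_option maxHeartbeats 1000000


lemma pow_le_descFactorial_add (s : ℕ) : ∀ d : ℕ, d ^ (s+1) ≤ d.descFactorial (s+1) + (s+1) * s * d ^ s := by
  induction s with
  | zero => intro d; simp [Nat.descFactorial]
  | succ s ih =>
    intro d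
    have h1 : d ^ (s+2) = d * d ^ (s+1) := by ring
    have h2 := ih d
    have h3 : d * d ^ (s+1) ≤ d * (d.descFactorial (s+1) + (s+1) * s * d ^ s) :=
      Nat.mul_le_mul_left d h2
    have h4 : d * d.descFactorial (s+1) ≤ d.descFactorial (s+2) + (s+1) * d.descFactorial (s+1) := by
      rw [Nat.descFactorial_succ]
      calc d * d.descFactorial (s+1) ≤ ((d - (s+1)) + (s+1)) * d.descFactorial (s+1) := by
            exact Nat.mul_le_mul_right _ (by omega)
        _ = (d - (s+1)) * d.descFactorial (s+1) + (s+1) * d.descFactorial (s+1) := by ring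
    have h5 : d.descFactorial (s+1) ≤ d ^ (s+1) := Nat.descFactorial_le_pow d (s+1)
    have h6 : d * ((s+1) * s * d ^ s) = (s+1) * s * d ^ (s+1) := by ring
    calc d ^ (s+2) = d * d ^ (s+1) := h1
      _ ≤ d * d.descFactorial (s+1) + (s+1) * s * d ^ (s+1) := by nlinarith [h3]
      _ ≤ d.descFactorial (s+2) + (s+1) * d.descFactorial (s+1) + (s+1) * s * d ^ (s+1) := by omega
      _ ≤ d.descFactorial (s+2) + (s+1) * d ^ (s+1) + (s+1) * s * d ^ (s+1) := by
          have := Nat.mul_le_mul_left (s+1) h5; omega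
      _ ≤ d.descFactorial (s+2) + (s+2) * (s+1) * d ^ (s+1) := by nlinarith
lemma thresh (T d s : ℕ) : T * d ^ s ≤ T ^ (s+1) + d ^ (s+1) := by
  rcases le_total d T with h | h
  · calc T * d ^ s ≤ T * T ^ s := Nat.mul_le_mul_left T (Nat.pow_le_pow_left h s)
      _ = T ^ (s+1) := by ring
      _ ≤ T ^ (s+1) + d ^ (s+1) := Nat.le_add_right _ _
  · calc T * d ^ s ≤ d * d ^ s := Nat.mul_le_mul_right _ h
      _ = d ^ (s+1) := by ring
      _ ≤ T ^ (s+1) + d ^ (s+1) := Nat.le_add_left _ _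

section Lemmas
variable {α : Type*} [Fintype α] (F : SimpleGraph α)

lemma deg_le {n : ℕ} (G : SimpleGraph (Fin n)) (v : Fin n) : (G.neighborSet v).ncard ≤ n := by
  calc (G.neighborSet v).ncard ≤ (Set.univ : Set (Fin n)).ncard :=
        Set.ncard_le_ncard (Set.subset_univ _) (Set.finite_univ)
    _ = n := by rw [Set.ncard_univ]; simp

lemma not_contains_bot (hedge : ∃ a b, F.Adj a b) {n : ℕ} :
    ¬ Contains F (⊥ : SimpleGraph (Fin n)) := by
  rintro ⟨f, hf⟩
  obtain ⟨a, b, hab⟩ := hedge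
  exact hf a b hab

lemma SB_nonempty (hedge : ∃ a b, F.Adj a b) (n r : ℕ) :
    {m | ∃ G : SimpleGraph (Fin n), ¬ Contains F G ∧ degPow G r = m}.Nonempty :=
  ⟨_, ⊥, not_contains_bot F hedge, rfl⟩

lemma SB_bdd (n r : ℕ) :
    BddAbove {m | ∃ G : SimpleGraph (Fin n), ¬ Contains F G ∧ degPow G r = m} := by
  refine ⟨n * n ^ r, ?_⟩
  rintro m ⟨G, -, rfl⟩
  calc degPow G r ≤ ∑ _v : Fin n, n ^ r :=
        Finset.sum_le_sum fun v _ => Nat.pow_le_pow_left (deg_le G v) r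
    _ = n * n ^ r := by simp [Finset.sum_const, Nat.smul_one_eq_cast]

lemma SA_nonempty (hedge : ∃ a b, F.Adj a b) (n p : ℕ) :
    {m | ∃ G : SimpleGraph (Fin n), ¬ Contains F G ∧ starCount G p = m}.Nonempty :=
  ⟨_, ⊥, not_contains_bot F hedge, rfl⟩

lemma SA_bdd (n p : ℕ) :
    BddAbove {m | ∃ G : SimpleGraph (Fin n), ¬ Contains F G ∧ starCount G p = m} := by
  refine ⟨n * n ^ p, ?_⟩
  rintro m ⟨G, -, rfl⟩
  calc starCount G p ≤ ∑ _v : Fin n, n ^ p :=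
        Finset.sum_le_sum fun v _ => by
          have h1 : ((G.neighborSet v).ncard).choose p ≤ ((G.neighborSet v).ncard).descFactorial p := by
            rw [Nat.descFactorial_eq_factorial_mul_choose]
            exact Nat.le_mul_of_pos_left _ (Nat.factorial_pos p)
          exact h1.trans ((Nat.descFactorial_le_pow _ _).trans (Nat.pow_le_pow_left (deg_le G v) p))
    _ = n * n ^ p := by simp [Finset.sum_const, Nat.smul_one_eq_cast]
end Lemmas

section KeyLemmas
variable {α : Type*} [Fintype α] (F : SimpleGraph α)

lemma key1 (hedge : ∃ a b, F.Adj a b) (n r : ℕ) : r.factorial * exStarCount n r F ≤ exDegPow n r F := by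
  have hA : exStarCount n r F ≤ exDegPow n r F / r.factorial := by
    apply csSup_le (SA_nonempty F hedge n r)
    rintro m ⟨G, hG, rfl⟩
    rw [Nat.le_div_iff_mul_le (Nat.factorial_pos r)]
    have h1 : starCount G r * r.factorial ≤ degPow G r := by
      rw [starCount, degPow, Finset.sum_mul]
      apply Finset.sum_le_sum
      intro v _
      rw [mul_comm, ← Nat.descFactorial_eq_factorial_mul_choose]
      exact Nat.descFactorial_le_pow _ _
    exact h1.trans (le_csSup (SB_bdd F n r) ⟨G, hG, rfl⟩)
  calc r.factorial * exStarCount n r F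
      ≤ r.factorial * (exDegPow n r F / r.factorial) := Nat.mul_le_mul_left _ hA
    _ ≤ exDegPow n r F := by rw [mul_comm]; exact Nat.div_mul_le_self _ _

lemma key2 (hedge : ∃ a b, F.Adj a b) (hnostar : ∀ v : α, ∃ a b, F.Adj a b ∧ a ≠ v ∧ b ≠ v)
    (n r : ℕ) (hn : 2 ≤ n) : (n-1)^r ≤ exDegPow n r F := by
  set c : Fin n := ⟨0, by omega⟩ with hc
  set G : SimpleGraph (Fin n) := mkGraph (fun v w => v = c) with hGdef
  have hadj : ∀ v w, G.Adj v w ↔ v ≠ w ∧ (v = c ∨ w = c) := fun v w => Iff.rfl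
  have hfree : ¬ Contains F G := by
    rintro ⟨f, hf⟩
    have key : ∀ v : α, f v = c → False := by
      intro v hv
      obtain ⟨x, y, hxy, hx, hy⟩ := hnostar v
      obtain ⟨hne, h | h⟩ := (hadj _ _).mp (hf x y hxy)
      · exact hx (f.injective (h.trans hv.symm))
      · exact hy (f.injective (h.trans hv.symm))
    obtain ⟨a, b, hab⟩ := hedge
    obtain ⟨hne, h | h⟩ := (hadj _ _).mp (hf a b hab)
    · exact key a h
    · exact key b h
  have hnbr : G.neighborSet c = {c}ᶜ := by
    ext w
    simp only [SimpleGraph.mem_neighborSet, hadj, Set.mem_compl_iff, Set.mem_singleton_iff]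
    tauto
  have hcard : (G.neighborSet c).ncard = n - 1 := by
    have := Set.ncard_add_ncard_compl ({c} : Set (Fin n))
    rw [Set.ncard_singleton, Nat.card_eq_fintype_card, Fintype.card_fin] at this
    rw [hnbr]
    omega
  have hdeg : (n-1)^r ≤ degPow G r := by
    rw [degPow, ← hcard]
    exact Finset.single_le_sum (f := fun v => ((G.neighborSet v).ncard)^r) (fun v _ => Nat.zero_le _) (Finset.mem_univ c)
  exact hdeg.trans (le_csSup (SB_bdd F n r) ⟨G, hfree, rfl⟩)

lemma key3 (hedge : ∃ a b, F.Adj a b) (n T s : ℕ) :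
    T * exDegPow n (s+1) F ≤ T * (Nat.factorial (s+1) * exStarCount n (s+1) F)
      + (s+1)*s*(n * T^(s+1) + exDegPow n (s+1) F) := by
  obtain ⟨G, hG, hB⟩ := Nat.sSup_mem (SB_nonempty F hedge n (s+1)) (SB_bdd F n (s+1))
  have hB' : exDegPow n (s+1) F = degPow G (s+1) := hB.symm
  rw [hB']
  have hst : starCount G (s+1) ≤ exStarCount n (s+1) F := le_csSup (SA_bdd F n (s+1)) ⟨G, hG, rfl⟩
  have main : T * degPow G (s+1) ≤ T * (Nat.factorial (s+1) * starCount G (s+1))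
      + (s+1)*s*(n * T^(s+1) + degPow G (s+1)) := by
    have pv : ∀ d : ℕ, T * d^(s+1) ≤ T * d.descFactorial (s+1) + (s+1)*s*(T^(s+1) + d^(s+1)) := by
      intro d
      calc T * d^(s+1) ≤ T * (d.descFactorial (s+1) + (s+1)*s*d^s) :=
            Nat.mul_le_mul_left T (pow_le_descFactorial_add s d)
        _ = T * d.descFactorial (s+1) + (s+1)*s*(T * d^s) := by ring
        _ ≤ T * d.descFactorial (s+1) + (s+1)*s*(T^(s+1) + d^(s+1)) :=
            Nat.add_le_add_left (Nat.mul_le_mul_left _ (thresh T d s)) _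
    have hsum : ∑ v : Fin n, ((G.neighborSet v).ncard).descFactorial (s+1)
        = Nat.factorial (s+1) * starCount G (s+1) := by
      rw [starCount, Finset.mul_sum]
      exact Finset.sum_congr rfl fun v _ => Nat.descFactorial_eq_factorial_mul_choose _ _
    calc T * degPow G (s+1) = ∑ v : Fin n, T * ((G.neighborSet v).ncard)^(s+1) := by
          rw [degPow, Finset.mul_sum]
      _ ≤ ∑ v : Fin n, (T * ((G.neighborSet v).ncard).descFactorial (s+1)
            + (s+1)*s*(T^(s+1) + ((G.neighborSet v).ncard)^(s+1))) :=
          Finset.sum_le_sum fun v _ => pv _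
      _ = T * (Nat.factorial (s+1) * starCount G (s+1)) + (s+1)*s*(n * T^(s+1) + degPow G (s+1)) := by
          rw [Finset.sum_add_distrib, ← Finset.mul_sum, hsum, ← Finset.mul_sum,
            Finset.sum_add_distrib, Finset.sum_const, Finset.card_univ, Fintype.card_fin,
            smul_eq_mul, degPow]
  calc T * degPow G (s+1) ≤ T * (Nat.factorial (s+1) * starCount G (s+1))
        + (s+1)*s*(n * T^(s+1) + degPow G (s+1)) := main
    _ ≤ T * (Nat.factorial (s+1) * exStarCount n (s+1) F)
        + (s+1)*s*(n * T^(s+1) + degPow G (s+1)) := by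
        have := Nat.mul_le_mul_left (Nat.factorial (s+1)) hst
        exact Nat.add_le_add_right (Nat.mul_le_mul_left T this) _
end KeyLemmas

/-- If `F` is a finite graph with at least one edge such that no single
vertex of `F` is incident to all edges of `F`, then
`ex(n, S_r, F) = (1/r! + o(1)) · ex_r(n, F)` as `n → ∞`. -/
theorem stmt_0 {α : Type*} [Fintype α] (r : ℕ) (hr : 1 ≤ r) (F : SimpleGraph α)
    (hedge : ∃ a b, F.Adj a b)
    (hnostar : ∀ v : α, ∃ a b, F.Adj a b ∧ a ≠ v ∧ b ≠ v) :
    Filter.Tendsto (fun n : ℕ => (exStarCount n r F : ℝ) / (exDegPow n r F : ℝ))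
      Filter.atTop (nhds (1 / (Nat.factorial r : ℝ))) := by
  obtain ⟨s, rfl⟩ : ∃ s, r = s + 1 := ⟨r - 1, by omega⟩
  set Lr : ℝ := ((s:ℝ)+1) * s with hLr
  have hLnn : 0 ≤ Lr := by positivity
  set fac : ℝ := (Nat.factorial (s+1) : ℝ) with hfacdef
  have hfac : 0 < fac := by positivity
  have hfac1 : 1 ≤ fac := by
    rw [hfacdef]; exact_mod_cast Nat.one_le_iff_ne_zero.mpr (Nat.factorial_ne_zero _)
  rw [Metric.tendsto_atTop]
  intro ε hε
  obtain ⟨T₀, hT₀⟩ := exists_nat_gt (4 * Lr / ε)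
  set T : ℕ := T₀ + 1 with hTdef
  have hTpos : (0:ℝ) < T := by positivity
  have h4T : 4 * Lr ≤ ε * T := by
    rw [div_lt_iff₀ hε] at hT₀
    have : (T₀:ℝ) ≤ T := by exact_mod_cast Nat.le_succ T₀
    nlinarith
  obtain ⟨M, hM⟩ := exists_nat_gt (8 * Lr * (T:ℝ)^s / ε)
  refine ⟨M + 2, fun n hn => ?_⟩
  have hn2 : 2 ≤ n := by omega
  set A : ℕ := exStarCount n (s+1) F with hA
  set B : ℕ := exDegPow n (s+1) F with hB
  have hBlb : (n-1)^(s+1) ≤ B := key2 F hedge hnostar n (s+1) hn2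
  have hBpos : 0 < B := lt_of_lt_of_le (Nat.one_le_pow _ _ (by omega)) hBlb
  have hBR : (0:ℝ) < (B:ℝ) := by exact_mod_cast hBpos
  have hk1 : fac * (A:ℝ) ≤ B := by rw [hfacdef]; exact_mod_cast key1 F hedge n (s+1)
  have hk3 : (T:ℝ) * B ≤ (T:ℝ) * (fac * A) + Lr * ((n:ℝ) * (T:ℝ)^(s+1) + B) := by
    rw [hfacdef, hLr]
    exact_mod_cast key3 F hedge n T s
  have hn1R : (1:ℝ) ≤ (n:ℝ) - 1 := by
    have : (2:ℝ) ≤ n := by exact_mod_cast hn2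
    linarith
  have hBcast : ((n:ℝ)-1)^(s+1) ≤ (B:ℝ) := by
    have : (((n-1 : ℕ)):ℝ)^(s+1) ≤ (B:ℝ) := by exact_mod_cast hBlb
    rwa [Nat.cast_sub (by omega), Nat.cast_one] at this
  have hnle : (n:ℝ) ≤ 2 * ((n:ℝ) - 1) := by linarith
  -- key numeric bound
  have h4LB : 4 * Lr * (T:ℝ)^s * n ≤ ε * B := by
    rcases Nat.eq_zero_or_pos s with hs | hs
    · subst hs
      simp only [hLr] at *
      norm_num
      positivity
    · have h8 : 8 * Lr * (T:ℝ)^s ≤ ε * ((n:ℝ) - 1) := by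
        rw [div_lt_iff₀ hε] at hM
        have hMn : (M:ℝ) + 1 ≤ (n:ℝ) - 1 := by
          have : (M + 2 : ℝ) ≤ n := by exact_mod_cast hn
          linarith
        nlinarith
      have hsq : ((n:ℝ)-1)^2 ≤ ((n:ℝ)-1)^(s+1) := by
        apply pow_le_pow_right₀ hn1R; omega
      have hTs : (0:ℝ) ≤ (T:ℝ)^s := by positivity
      nlinarith [mul_le_mul_of_nonneg_left hnle (mul_nonneg (mul_nonneg (by norm_num : (0:ℝ) ≤ 4) hLnn) hTs)]
  have e2 : Lr * ((n:ℝ) * (T:ℝ)^(s+1)) ≤ (ε/4) * ((T:ℝ) * (fac * B)) := by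
    have hTpow : (T:ℝ)^(s+1) = (T:ℝ)^s * T := by rw [pow_succ]
    rw [hTpow]
    have e2a : Lr * ((n:ℝ) * ((T:ℝ)^s * T)) ≤ (ε/4) * ((T:ℝ) * B) := by
      nlinarith [mul_le_mul_of_nonneg_right h4LB hTpos.le]
    have e2b : (ε/4) * ((T:ℝ) * B) * 1 ≤ (ε/4) * ((T:ℝ) * B) * fac :=
      mul_le_mul_of_nonneg_left hfac1 (by positivity)
    nlinarith [e2a, e2b]
  have e1 : Lr * (B:ℝ) ≤ (ε/4) * ((T:ℝ) * (fac * B)) := by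
    have e1a : 4 * Lr * B ≤ ε * T * B := by
      nlinarith [mul_le_mul_of_nonneg_right h4T hBR.le]
    have e1b : (ε/4) * ((T:ℝ) * B) * 1 ≤ (ε/4) * ((T:ℝ) * B) * fac :=
      mul_le_mul_of_nonneg_left hfac1 (by positivity)
    nlinarith [e1a, e1b]
  have hT2 : (T:ℝ) * ((B:ℝ) - fac * A) ≤ (T:ℝ) * ((ε/2) * (fac * B)) := by nlinarith [hk3, e1, e2]
  have hfinal : (B:ℝ) - fac * A ≤ (ε/2) * (fac * B) := le_of_mul_le_mul_left hT2 hTpos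
  have hABle : (A:ℝ)/B ≤ 1/fac := by
    rw [div_le_div_iff₀ hBR hfac]; nlinarith [hk1]
  show dist ((A:ℝ)/B) (1/fac) < ε
  rw [Real.dist_eq, abs_of_nonpos (by linarith)]
  have : 1/fac - (A:ℝ)/B ≤ ε/2 := by
    rw [div_sub_div _ _ (ne_of_gt hfac) (ne_of_gt hBR), div_le_iff₀ (by positivity)]
    nlinarith [hfinal]
  linarith
end

section
/- Let r and k be integers with 1 ≤ r < k. Then ex(n, S_r, K_{k+1}) = (1 + o(1)) · N(S_r, T(n, k)) as n → ∞; that is, the ratio ex(n, S_r, K_{k+1}) / N(S_r, T(n, k)) tends to 1 as n tends to infinity. -/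
open Finset

lemma tangent_ineq (m : ℕ) (N c : ℝ) (hc0 : 0 < c) (hcN : (m+2) * c ≤ N) (x : ℝ) (hx0 : 0 ≤ x) (hxN : x ≤ N) :
    x * (N - x)^(m+1) ≤ (N - c)^m * ((m+1) * c^2 + x * (N - (m+2)*c)) := by
  set φ : ℝ → ℝ := fun t => (N - t)^m * (N - (m+2)*t) with hφ
  set F : ℝ → ℝ := fun x => (N-c)^m * ((m+1) * c^2 + x*(N-(m+2)*c)) - x*(N-x)^(m+1) with hF
  have hcle : c ≤ N := le_trans (by nlinarith) hcN
  have hder : ∀ y : ℝ, HasDerivAt F (φ c - φ y) y := by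
    intro y
    have h1 : HasDerivAt (fun x : ℝ => x*(N-x)^(m+1)) (φ y) y := by
      have hs : HasDerivAt (fun x : ℝ => N - x) (-1) y := by
        simpa using (hasDerivAt_id y).const_sub N
      have hp := hs.pow (m+1)
      have := (hasDerivAt_id y).mul hp
      refine this.congr_deriv ?_
      simp only [hφ, Nat.add_sub_cancel, id, Pi.pow_apply]
      push_cast
      rw [pow_succ]
      ring
    have h2 : HasDerivAt (fun x : ℝ => (N-c)^m * ((m+1) * c^2 + x*(N-(m+2)*c))) (φ c) y := by
      have := (((hasDerivAt_id y).mul_const (N-(m+2)*c)).const_add ((m+1 : ℝ) * c^2)).const_mul ((N-c)^m)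
      refine this.congr_deriv ?_
      simp only [hφ]; ring
    exact h2.sub h1
  have hdiff : ∀ y : ℝ, DifferentiableAt ℝ F y := fun y => (hder y).differentiableAt
  have hderiv : ∀ y : ℝ, deriv F y = φ c - φ y := fun y => (hder y).deriv
  have hNc : 0 ≤ N - c := by linarith
  have hφc : 0 ≤ φ c := mul_nonneg (pow_nonneg hNc m) (by linarith)
  have mono1 : ∀ t, 0 ≤ t → t ≤ c → φ c ≤ φ t := by
    intro t ht0 htc
    have h1 : (N-c)^m ≤ (N-t)^m := pow_le_pow_left₀ hNc (by linarith) m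
    have h2 : N - (m+2)*c ≤ N - (m+2)*t := by nlinarith
    exact mul_le_mul h1 h2 (by linarith) (pow_nonneg (by linarith) m)
  have mono2 : ∀ t, c ≤ t → t ≤ N → φ t ≤ φ c := by
    intro t htc htN
    rcases le_or_gt (N - (m+2)*t) 0 with h | h
    · exact le_trans (mul_nonpos_of_nonneg_of_nonpos (pow_nonneg (by linarith) m) h) hφc
    · exact mul_le_mul (pow_le_pow_left₀ (by linarith) (by linarith) m) (by nlinarith) (le_of_lt h) (pow_nonneg hNc m)
  have hFc : F c = 0 := by
    simp only [hF]
    rw [pow_succ]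
    ring
  have hcont : Continuous F := by
    fun_prop
  have hge : 0 ≤ F x := by
    rcases le_total x c with hxc | hxc
    · have hanti : AntitoneOn F (Set.Icc 0 c) := by
        apply antitoneOn_of_deriv_nonpos (convex_Icc 0 c) hcont.continuousOn
        · exact fun y _ => (hdiff y).differentiableWithinAt
        · intro y hy
          rw [interior_Icc] at hy
          rw [hderiv]
          have := mono1 y (le_of_lt hy.1) (le_of_lt hy.2)
          linarith
      have := hanti (Set.mem_Icc.2 ⟨hx0, hxc⟩) (Set.mem_Icc.2 ⟨le_of_lt hc0, le_refl c⟩) hxc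
      linarith [hFc]
    · have hmono : MonotoneOn F (Set.Icc c N) := by
        apply monotoneOn_of_deriv_nonneg (convex_Icc c N) hcont.continuousOn
        · exact fun y _ => (hdiff y).differentiableWithinAt
        · intro y hy
          rw [interior_Icc] at hy
          rw [hderiv]
          have := mono2 y (le_of_lt hy.1) (le_of_lt hy.2)
          linarith
      have := hmono (Set.mem_Icc.2 ⟨le_refl c, hcle⟩) (Set.mem_Icc.2 ⟨hxc, hxN⟩) hxc
      linarith [hFc]
  simp only [hF] at hge
  linarith

lemma key_sum (m k : ℕ) (hk : m + 2 ≤ k) (N : ℝ) (hN : 0 < N) (x : Fin k → ℝ)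
    (h0 : ∀ i, 0 ≤ x i) (hs : ∑ i, x i = N) :
    ∑ i, x i * (N - x i)^(m+1) ≤ N * (N - N/k)^(m+1) := by
  have hk0 : (0:ℝ) < k := by
    have : 0 < k := by omega
    exact_mod_cast this
  set c : ℝ := N / k with hc
  have hc0 : 0 < c := div_pos hN hk0
  have hcN : (m+2) * c ≤ N := by
    rw [hc, ← mul_div_assoc, div_le_iff₀ hk0]
    have : (m:ℝ) + 2 ≤ k := by exact_mod_cast hk
    nlinarith
  have hxle : ∀ i, x i ≤ N := by
    intro i
    rw [← hs]
    exact Finset.single_le_sum (fun j _ => h0 j) (mem_univ i)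
  calc ∑ i, x i * (N - x i)^(m+1)
      ≤ ∑ i : Fin k, (N - c)^m * ((m+1) * c^2 + x i * (N - (m+2)*c)) :=
        Finset.sum_le_sum fun i _ => tangent_ineq m N c hc0 hcN (x i) (h0 i) (hxle i)
    _ = (N - c)^m * (k * ((m+1) * c^2) + N * (N - (m+2)*c)) := by
        rw [← Finset.mul_sum]
        congr 1
        rw [Finset.sum_add_distrib, Finset.sum_const, ← Finset.sum_mul, hs]
        simp [card_univ]
    _ = N * (N - N/k)^(m+1) := by
        rw [← hc, pow_succ (N - c) m]
        have hck : c * k = N := by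
          rw [hc]; field_simp
        have h2 : (k:ℝ) * ((m+1) * c^2) + N * (N - (m+2)*c) = N * (N - c) := by
          nlinarith [hck]
        linear_combination (N-c)^m * h2


lemma majorize : ∀ (k : ℕ) (V : Type) (_ : Fintype V) (G : SimpleGraph V) (_ : DecidableRel G.Adj),
    G.CliqueFree (k+1) → ∃ P : V → Fin k,
      ∀ v, #(univ.filter fun u => G.Adj v u) + #(univ.filter fun u => P u = P v)
        ≤ Fintype.card V := by
  intro k
  induction k with
  | zero =>
    intro V _ G _ hG
    have hemp : IsEmpty V := by
      by_contra h
      rw [not_isEmpty_iff] at h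
      obtain ⟨v⟩ := h
      exact hG {v} ⟨by simp [SimpleGraph.IsClique], by simp⟩
    exact ⟨fun v => (hemp.false v).elim, fun v => (hemp.false v).elim⟩
  | succ k ih =>
    intro V _ G _ hG
    rcases isEmpty_or_nonempty V with hV | hV
    · exact ⟨fun _ => 0, fun v => (hV.false v).elim⟩
    obtain ⟨w, -, hw⟩ := Finset.exists_max_image (univ : Finset V)
      (fun v => #(univ.filter fun u => G.Adj v u)) ⟨Classical.arbitrary V, mem_univ _⟩
    haveI hdec : DecidablePred (· ∈ G.neighborSet w) := fun u => ‹DecidableRel G.Adj› w u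
    -- the induced graph on the neighborhood
    have hfree : (G.induce (G.neighborSet w)).CliqueFree (k+1) := by
      classical
      intro t ht
      refine hG (insert w (t.map (Function.Embedding.subtype _))) ⟨?_, ?_⟩
      · intro a ha b hb hab
        simp only [coe_insert, Set.mem_insert_iff, mem_coe, Finset.mem_map,
          Function.Embedding.coe_subtype] at ha hb
        rcases ha with ha | ⟨a', ha', haa⟩
        · rcases hb with hb | ⟨b', hb', hbb⟩
          · exact absurd (ha.trans hb.symm) hab
          · subst ha; rw [← hbb]; exact b'.2
        · rcases hb with hb | ⟨b', hb', hbb⟩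
          · have h2 : G.Adj w ↑a' := a'.2
            rw [hb, ← haa]; exact h2.symm
          · have hne : a' ≠ b' := fun h => hab (by rw [← haa, ← hbb, h])
            rw [← haa, ← hbb]
            exact ht.1 ha' hb' hne
      · rw [Finset.card_insert_of_notMem, Finset.card_map, ht.2]
        intro hmem
        simp only [Finset.mem_map, Function.Embedding.coe_subtype] at hmem
        obtain ⟨a', -, ha'⟩ := hmem
        have h2 : G.Adj w ↑a' := a'.2
        exact G.irrefl (ha' ▸ h2)
    obtain ⟨P', hP'⟩ := ih ↥(G.neighborSet w) inferInstance (G.induce (G.neighborSet w))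
      inferInstance hfree
    have hcards : Fintype.card ↥(G.neighborSet w) = #(univ.filter fun u => G.Adj w u) := by
      apply Fintype.card_of_subtype
      intro x
      simp [SimpleGraph.mem_neighborSet]
    refine ⟨fun v => if h : v ∈ G.neighborSet w then (P' ⟨v, h⟩).succ else 0, fun v => ?_⟩
    have hcompl : #(univ.filter fun u => u ∈ G.neighborSet w)
        + #(univ.filter fun u => ¬ u ∈ G.neighborSet w) = Fintype.card V := by
      rw [Finset.card_filter_add_card_filter_not, Finset.card_univ]
    have hnbhd : #(univ.filter fun u => u ∈ G.neighborSet w)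
        = #(univ.filter fun u => G.Adj w u) := by
      congr 1
      apply Finset.filter_congr
      intro u _
      simp [SimpleGraph.mem_neighborSet]
    by_cases hv : v ∈ G.neighborSet w
    · -- class of v corresponds to class in the induced graph
      have hclass : (univ.filter fun u => (if h : u ∈ G.neighborSet w then (P' ⟨u, h⟩).succ else 0)
          = (if h : v ∈ G.neighborSet w then (P' ⟨v, h⟩).succ else 0))
          = (univ.filter fun x : ↥(G.neighborSet w) => P' x = P' ⟨v, hv⟩).map
            (Function.Embedding.subtype _) := by
        rw [dif_pos hv]
        ext u
        simp only [mem_filter, mem_univ, true_and, Finset.mem_map,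
          Function.Embedding.coe_subtype]
        constructor
        · intro hu
          by_cases hus : u ∈ G.neighborSet w
          · rw [dif_pos hus, Fin.succ_inj] at hu
            exact ⟨⟨u, hus⟩, hu, rfl⟩
          · rw [dif_neg hus] at hu
            exact absurd hu.symm (Fin.succ_ne_zero _)
        · rintro ⟨x, hx, rfl⟩
          rw [dif_pos x.2, Fin.succ_inj]
          exact hx
      have hdegsplit : #(univ.filter fun u => G.Adj v u)
          = #(univ.filter fun u => G.Adj v u ∧ u ∈ G.neighborSet w)
          + #(univ.filter fun u => G.Adj v u ∧ ¬ u ∈ G.neighborSet w) := by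
        rw [← Finset.filter_filter, ← Finset.filter_filter,
          Finset.card_filter_add_card_filter_not]
      have hB : #(univ.filter fun u => G.Adj v u ∧ ¬ u ∈ G.neighborSet w)
          ≤ #(univ.filter fun u => ¬ u ∈ G.neighborSet w) :=
        Finset.card_le_card (fun u hu => by
          simp only [mem_filter] at *; tauto)
      have hA : #(univ.filter fun u => G.Adj v u ∧ u ∈ G.neighborSet w)
          = #(univ.filter fun x : ↥(G.neighborSet w) =>
              (G.induce (G.neighborSet w)).Adj ⟨v, hv⟩ x) := by
        rw [show (univ.filter fun u => G.Adj v u ∧ u ∈ G.neighborSet w)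
            = (univ.filter fun x : ↥(G.neighborSet w) =>
              (G.induce (G.neighborSet w)).Adj ⟨v, hv⟩ x).map
              (Function.Embedding.subtype _) from ?_, Finset.card_map]
        ext u
        simp only [mem_filter, mem_univ, true_and, Finset.mem_map,
          Function.Embedding.coe_subtype, SimpleGraph.comap_adj]
        constructor
        · rintro ⟨hadj, hus⟩
          exact ⟨⟨u, hus⟩, hadj, rfl⟩
        · rintro ⟨x, hx, rfl⟩
          exact ⟨hx, x.2⟩
      have hPv := hP' ⟨v, hv⟩
      rw [hcards] at hPv
      rw [hclass, Finset.card_map, hdegsplit, hA]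
      omega
    · have hclass : (univ.filter fun u => (if h : u ∈ G.neighborSet w then (P' ⟨u, h⟩).succ else 0)
          = (if h : v ∈ G.neighborSet w then (P' ⟨v, h⟩).succ else 0))
          = univ.filter fun u => ¬ u ∈ G.neighborSet w := by
        rw [dif_neg hv]
        ext u
        simp only [mem_filter, mem_univ, true_and]
        by_cases hus : u ∈ G.neighborSet w
        · rw [dif_pos hus]
          simp [Fin.succ_ne_zero, hus]
        · rw [dif_neg hus]
          simp [hus]
      have hdv : #(univ.filter fun u => G.Adj v u) ≤ #(univ.filter fun u => G.Adj w u) :=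
        hw v (mem_univ v)
      rw [hclass]
      omega

lemma contains_iff {β : Type*} (m : ℕ) (G : SimpleGraph β) :
    Contains (SimpleGraph.completeGraph (Fin m)) G ↔ ¬ G.CliqueFree m := by
  rw [SimpleGraph.not_cliqueFree_iff]
  constructor
  · rintro ⟨f, hf⟩
    exact ⟨⟨⟨f, fun h => hf _ _ h⟩, f.injective⟩⟩
  · rintro ⟨f⟩
    exact ⟨⟨f, f.injective⟩, fun a b hab => f.toHom.map_adj hab⟩

-- Turán graph degree bound: each vertex misses at most n/k+1 vertices
lemma turan_mod_card (n k : ℕ) (hk : 0 < k) (v : Fin n) :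
    #(univ.filter fun w : Fin n => (w : ℕ) % k = (v : ℕ) % k) ≤ n / k + 1 := by
  have : #(univ.filter fun w : Fin n => (w : ℕ) % k = (v : ℕ) % k)
      ≤ #(Finset.range (n / k + 1)) := by
    have h1 : ∀ w ∈ univ.filter fun w : Fin n => (w : ℕ) % k = (v : ℕ) % k,
        (fun w : Fin n => (w : ℕ) / k) w ∈ Finset.range (n / k + 1) := by
      intro w hw
      show (w : ℕ) / k ∈ Finset.range (n / k + 1)
      rw [Finset.mem_range]
      have : (w : ℕ) / k ≤ n / k := Nat.div_le_div_right (le_of_lt w.isLt)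
      omega
    have h2 : Set.InjOn (fun w : Fin n => (w : ℕ) / k)
        (univ.filter fun w : Fin n => (w : ℕ) % k = (v : ℕ) % k) := by
      intro a ha b hb hab
      simp only [coe_filter, Set.mem_setOf_eq, mem_univ, true_and, mem_coe, mem_filter] at ha hb
      have ha' := Nat.div_add_mod (a : ℕ) k
      have hb' := Nat.div_add_mod (b : ℕ) k
      have hab' : (a : ℕ) / k = (b : ℕ) / k := by simpa using hab
      clear hab
      have hnat : (a : ℕ) = (b : ℕ) := by
        rw [← ha', ← hb', hab', ha, hb]
      exact Fin.ext hnat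
    exact Finset.card_le_card_of_injOn _ h1 h2
  simpa using this

lemma turan_degree_lb (n k : ℕ) (hk : 0 < k) (v : Fin n) :
    n ≤ (SimpleGraph.turanGraph n k).degree v + (n / k + 1) := by
  have hsplit : #(univ.filter fun w : Fin n => (SimpleGraph.turanGraph n k).Adj v w)
      + #(univ.filter fun w : Fin n => ¬ (SimpleGraph.turanGraph n k).Adj v w)
      = n := by
    rw [Finset.card_filter_add_card_filter_not, Finset.card_univ, Fintype.card_fin]
  have hdeg : (SimpleGraph.turanGraph n k).degree v
      = #(univ.filter fun w : Fin n => (SimpleGraph.turanGraph n k).Adj v w) := by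
    rw [SimpleGraph.degree, SimpleGraph.neighborFinset_eq_filter]
  have hnotadj : (univ.filter fun w : Fin n => ¬ (SimpleGraph.turanGraph n k).Adj v w)
      = (univ.filter fun w : Fin n => (w : ℕ) % k = (v : ℕ) % k) := by
    apply Finset.filter_congr
    intro w _
    simp only [SimpleGraph.turanGraph, not_not, ne_eq]
    tauto
  have := turan_mod_card n k hk v
  rw [hnotadj] at hsplit
  omega

lemma star_bound (m k n : ℕ) (hk : m + 2 ≤ k) (G : SimpleGraph (Fin n))
    (hdec : DecidableRel G.Adj) (hG : G.CliqueFree (k+1)) (hn : 0 < n) :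
    ((m+1).factorial * (∑ v, ((G.neighborSet v).ncard).choose (m+1)) : ℝ)
      ≤ n * ((n:ℝ) - n/k)^(m+1) := by
  obtain ⟨P, hP⟩ := majorize k (Fin n) inferInstance G hdec hG
  set s : Fin k → ℕ := fun i => #(univ.filter fun u => P u = i) with hs
  have hsum : ∑ i, s i = n := by
    rw [hs]
    rw [← Finset.card_eq_sum_card_fiberwise (f := P) (t := univ) (fun x _ => mem_univ _)]
    simp
  have hncard : ∀ v, (G.neighborSet v).ncard = #(univ.filter fun u => G.Adj v u) := by
    intro v
    rw [Set.ncard_eq_toFinset_card', ← SimpleGraph.neighborFinset_def,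
      SimpleGraph.neighborFinset_eq_filter]
  have hdeg : ∀ v, (G.neighborSet v).ncard + s (P v) ≤ n := by
    intro v
    rw [hncard v]
    have := hP v
    simpa using this
  have hsle : ∀ i, s i ≤ n := by
    intro i
    rw [← hsum]
    exact Finset.single_le_sum (fun j _ => Nat.zero_le _) (mem_univ i)
  have step1 : ∀ v : Fin n, ((m+1).factorial * ((G.neighborSet v).ncard).choose (m+1) : ℝ)
      ≤ ((n:ℝ) - s (P v))^(m+1) := by
    intro v
    have h1 : (m+1).factorial * ((G.neighborSet v).ncard).choose (m+1)
        ≤ (n - s (P v))^(m+1) := by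
      rw [← Nat.descFactorial_eq_factorial_mul_choose]
      calc ((G.neighborSet v).ncard).descFactorial (m+1)
          ≤ ((G.neighborSet v).ncard)^(m+1) := Nat.descFactorial_le_pow _ _
        _ ≤ (n - s (P v))^(m+1) := Nat.pow_le_pow_left (by have := hdeg v; omega) _
    calc ((m+1).factorial * ((G.neighborSet v).ncard).choose (m+1) : ℝ)
        = (((m+1).factorial * ((G.neighborSet v).ncard).choose (m+1) : ℕ) : ℝ) := by push_cast; ring
      _ ≤ (((n - s (P v))^(m+1) : ℕ) : ℝ) := by exact_mod_cast h1
      _ = ((n:ℝ) - s (P v))^(m+1) := by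
          rw [Nat.cast_pow, Nat.cast_sub (hsle (P v))]
  calc ((m+1).factorial * (∑ v, ((G.neighborSet v).ncard).choose (m+1)) : ℝ)
      = ∑ v : Fin n, ((m+1).factorial * ((G.neighborSet v).ncard).choose (m+1) : ℝ) := by
        push_cast
        rw [Finset.mul_sum]
    _ ≤ ∑ v : Fin n, ((n:ℝ) - s (P v))^(m+1) := Finset.sum_le_sum fun v _ => step1 v
    _ = ∑ i : Fin k, (s i : ℝ) * ((n:ℝ) - s i)^(m+1) := by
        rw [← Finset.sum_fiberwise_of_maps_to (g := P) (fun x _ => mem_univ (P x))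
          (f := fun v => ((n:ℝ) - s (P v))^(m+1))]
        apply Finset.sum_congr rfl
        intro i _
        have hcg : ∀ v ∈ univ.filter fun v => P v = i,
            ((n:ℝ) - s (P v))^(m+1) = ((n:ℝ) - s i)^(m+1) := by
          intro v hv
          simp only [mem_filter, mem_univ, true_and] at hv
          rw [hv]
        rw [Finset.sum_congr rfl hcg, Finset.sum_const, nsmul_eq_mul]
    _ ≤ n * ((n:ℝ) - n/k)^(m+1) := by
        apply key_sum m k hk n (by exact_mod_cast hn) (fun i => (s i : ℝ))
          (fun i => Nat.cast_nonneg _)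
        rw [← Nat.cast_sum, hsum]

lemma turan_star_lower (m k n : ℕ) (hk : 0 < k) :
    n * (n - n/k - (m+1))^(m+1)
      ≤ (m+1).factorial * ∑ v : Fin n,
        (((SimpleGraph.turanGraph n k).neighborSet v).ncard).choose (m+1) := by
  have hncard : ∀ v : Fin n, ((SimpleGraph.turanGraph n k).neighborSet v).ncard
      = (SimpleGraph.turanGraph n k).degree v := by
    intro v
    rw [Set.ncard_eq_toFinset_card', ← SimpleGraph.neighborFinset_def]
    rfl
  rw [Finset.mul_sum]
  have step : ∀ v : Fin n, (n - n/k - (m+1))^(m+1)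
      ≤ (m+1).factorial * (((SimpleGraph.turanGraph n k).neighborSet v).ncard).choose (m+1) := by
    intro v
    rw [hncard v, ← Nat.descFactorial_eq_factorial_mul_choose]
    have hd := turan_degree_lb n k hk v
    calc (n - n/k - (m+1))^(m+1)
        ≤ ((SimpleGraph.turanGraph n k).degree v + 1 - (m+1))^(m+1) :=
          Nat.pow_le_pow_left (by omega) _
      _ ≤ ((SimpleGraph.turanGraph n k).degree v).descFactorial (m+1) :=
          Nat.pow_sub_le_descFactorial _ _
  calc n * (n - n/k - (m+1))^(m+1)
      = ∑ _v : Fin n, (n - n/k - (m+1))^(m+1) := by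
        rw [Finset.sum_const, card_univ, Fintype.card_fin, smul_eq_mul]
    _ ≤ ∑ v : Fin n, (m+1).factorial *
          (((SimpleGraph.turanGraph n k).neighborSet v).ncard).choose (m+1) :=
        Finset.sum_le_sum fun v _ => step v


/-- For `1 ≤ r < k`,
`ex(n, S_r, K_{k+1}) = (1 + o(1)) · N(S_r, T(n,k))` as `n → ∞`. -/
theorem stmt_2 (r k : ℕ) (hr : 1 ≤ r) (hrk : r < k) :
    Filter.Tendsto
      (fun n : ℕ => (exStarCount n r (SimpleGraph.completeGraph (Fin (k + 1))) : ℝ) /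
        (starCount (SimpleGraph.turanGraph n k) r : ℝ))
      Filter.atTop (nhds 1) := by
  obtain ⟨m, rfl⟩ : ∃ m, r = m + 1 := ⟨r - 1, by omega⟩
  have hk2 : m + 2 ≤ k := by omega
  have hk0 : 0 < k := by omega
  have hkR : (2:ℝ) ≤ k := by exact_mod_cast (by omega : 2 ≤ k)
  set F : ℕ → ℝ := fun n => ((m+1).factorial : ℝ) with hF
  have hFpos : (0:ℝ) < ((m+1).factorial : ℝ) := by exact_mod_cast Nat.factorial_pos _
  -- upper comparison sequence
  set u : ℕ → ℝ := fun n => (((n:ℝ)*(1 - 1/k))^(m+1)) / (((n:ℝ)*(1 - 1/k) - (m+2))^(m+1)) with hu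
  have hkinv : (0:ℝ) < 1 - 1/(k:ℝ) := by
    rw [sub_pos]
    rw [div_lt_one (by linarith : (0:ℝ) < k)]
    linarith
  -- A n - (m+2) tends to atTop
  have hA : Filter.Tendsto (fun n : ℕ => (n:ℝ)*(1 - 1/k) - (m+2)) Filter.atTop Filter.atTop := by
    apply Filter.tendsto_atTop_add_const_right
    exact (tendsto_natCast_atTop_atTop).atTop_mul_const hkinv
  have hu1 : Filter.Tendsto u Filter.atTop (nhds 1) := by
    have hratio : Filter.Tendsto (fun n : ℕ => ((n:ℝ)*(1 - 1/k)) / ((n:ℝ)*(1 - 1/k) - (m+2)))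
        Filter.atTop (nhds 1) := by
      have h0 : Filter.Tendsto (fun n : ℕ => ((m+2):ℝ) / ((n:ℝ)*(1 - 1/k) - (m+2)))
          Filter.atTop (nhds 0) := Filter.Tendsto.div_atTop tendsto_const_nhds hA
      have heq : ∀ᶠ n : ℕ in Filter.atTop,
          1 + ((m+2):ℝ) / ((n:ℝ)*(1 - 1/k) - (m+2))
          = ((n:ℝ)*(1 - 1/k)) / ((n:ℝ)*(1 - 1/k) - (m+2)) := by
        filter_upwards [hA.eventually_gt_atTop 0] with n hn
        have hkne : (k:ℝ) ≠ 0 := by positivity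
        have hD : (n:ℝ)*(1 - 1/k) - (m+2) ≠ 0 := ne_of_gt hn
        have hexp : (n:ℝ)*((k:ℝ)-1) - k*(m+2) = k * ((n:ℝ)*(1-1/k) - (m+2)) := by
          field_simp
        have hD' : (n:ℝ)*((k:ℝ)-1) - k*(m+2) ≠ 0 := by
          rw [hexp]
          exact mul_ne_zero hkne hD
        rw [eq_div_iff hD, add_mul, div_mul_cancel₀ _ hD]
        ring
      have hadd := (tendsto_const_nhds (x := (1:ℝ)) (f := Filter.atTop (α := ℕ))).add h0
      rw [show (1:ℝ) + 0 = 1 by ring] at hadd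
      exact Filter.Tendsto.congr' heq hadd
    have := hratio.pow (m+1)
    rw [one_pow] at this
    apply this.congr
    intro n
    rw [div_pow]
  -- eventual bounds
  have hge : ∀ᶠ n : ℕ in Filter.atTop,
      1 ≤ (exStarCount n (m+1) (SimpleGraph.completeGraph (Fin (k + 1))) : ℝ) /
        (starCount (SimpleGraph.turanGraph n k) (m+1) : ℝ) ∧
      (exStarCount n (m+1) (SimpleGraph.completeGraph (Fin (k + 1))) : ℝ) /
        (starCount (SimpleGraph.turanGraph n k) (m+1) : ℝ) ≤ u n := by
    filter_upwards [Filter.eventually_ge_atTop (4*k*(m+2)+1), hA.eventually_gt_atTop 0]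
      with n hn hApos
    have hn0 : 0 < n := by omega
    have hnge : 8*(m+2)+1 ≤ n := le_trans (by nlinarith [hk2] : 8*(m+2)+1 ≤ 4*k*(m+2)+1) hn
    have hnk2 : n / k ≤ n / 2 := Nat.div_le_div_left (by omega) (by omega)
    -- the set defining exStarCount
    set S : Set ℕ := {m' | ∃ G : SimpleGraph (Fin n),
      ¬ Contains (SimpleGraph.completeGraph (Fin (k+1))) G ∧ starCount G (m+1) = m'} with hS
    have hbdd : BddAbove S := by
      refine ⟨n * (n.choose (m+1)), ?_⟩
      rintro x ⟨G, -, rfl⟩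
      calc starCount G (m+1) ≤ ∑ _v : Fin n, n.choose (m+1) := by
            apply Finset.sum_le_sum
            intro v _
            apply Nat.choose_le_choose
            calc (G.neighborSet v).ncard ≤ (Set.univ : Set (Fin n)).ncard :=
                  Set.ncard_le_ncard (Set.subset_univ _) Set.finite_univ
              _ = n := by rw [Set.ncard_univ, Nat.card_eq_fintype_card, Fintype.card_fin]
        _ = n * (n.choose (m+1)) := by
            rw [Finset.sum_const, card_univ, Fintype.card_fin, smul_eq_mul]
    have hne : S.Nonempty := by
      refine ⟨starCount (⊥ : SimpleGraph (Fin n)) (m+1), ⊥, ?_, rfl⟩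
      rw [contains_iff, not_not]
      exact SimpleGraph.cliqueFree_bot (by omega)
    -- Turán graph is in S
    have hTS : starCount (SimpleGraph.turanGraph n k) (m+1) ∈ S := by
      refine ⟨SimpleGraph.turanGraph n k, ?_, rfl⟩
      rw [contains_iff, not_not]
      exact SimpleGraph.turanGraph_cliqueFree hk0
    have hTle : starCount (SimpleGraph.turanGraph n k) (m+1)
        ≤ exStarCount n (m+1) (SimpleGraph.completeGraph (Fin (k + 1))) := le_csSup hbdd hTS
    -- the sup is attained
    obtain ⟨G₀, hG₀free, hG₀⟩ : exStarCount n (m+1) (SimpleGraph.completeGraph (Fin (k + 1))) ∈ S :=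
      Nat.sSup_mem hne hbdd
    have hG₀clique : G₀.CliqueFree (k+1) := by
      by_contra h
      exact hG₀free ((contains_iff _ _).mpr h)
    -- real bounds
    have hEub : ((m+1).factorial : ℝ) * (exStarCount n (m+1) (SimpleGraph.completeGraph (Fin (k + 1))) : ℝ)
        ≤ n * ((n:ℝ) - n/k)^(m+1) := by
      rw [← hG₀]
      exact star_bound m k n hk2 G₀ (Classical.decRel _) hG₀clique hn0
    have hAeq : (n:ℝ) - (n:ℝ)/k = (n:ℝ)*(1 - 1/k) := by ring
    -- lower bound for Turán count
    have hTlb : (n:ℝ) * ((n:ℝ)*(1 - 1/k) - (m+2))^(m+1)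
        ≤ ((m+1).factorial : ℝ) * (starCount (SimpleGraph.turanGraph n k) (m+1) : ℝ) := by
      have hnat := turan_star_lower m k n hk0
      have hsub : n / k + (m+1) ≤ n := by omega
      have hcast : ((n - n/k - (m+1) : ℕ) : ℝ) = (n:ℝ) - (n/k : ℕ) - ((m:ℝ)+1) := by
        rw [Nat.cast_sub (by omega : m+1 ≤ n - n/k), Nat.cast_sub (by omega : n/k ≤ n)]
        push_cast
        ring
      have hdivle : ((n/k : ℕ) : ℝ) ≤ (n:ℝ)/k := Nat.cast_div_le
      have hbase : (n:ℝ)*(1 - 1/k) - (m+2) ≤ ((n - n/k - (m+1) : ℕ) : ℝ) := by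
        rw [hcast, ← hAeq]
        linarith
      have hbase0 : (0:ℝ) ≤ (n:ℝ)*(1 - 1/k) - (m+2) := le_of_lt hApos
      calc (n:ℝ) * ((n:ℝ)*(1 - 1/k) - (m+2))^(m+1)
          ≤ (n:ℝ) * (((n - n/k - (m+1) : ℕ) : ℝ))^(m+1) := by
            apply mul_le_mul_of_nonneg_left _ (Nat.cast_nonneg n)
            exact pow_le_pow_left₀ hbase0 hbase _
        _ = ((n * (n - n/k - (m+1))^(m+1) : ℕ) : ℝ) := by push_cast; ring
        _ ≤ ((m+1).factorial : ℝ) * (starCount (SimpleGraph.turanGraph n k) (m+1) : ℝ) := by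
            rw [show ((m+1).factorial : ℝ) * (starCount (SimpleGraph.turanGraph n k) (m+1) : ℝ)
              = (((m+1).factorial * starCount (SimpleGraph.turanGraph n k) (m+1) : ℕ) : ℝ)
              from by push_cast; ring]
            exact_mod_cast hnat
    have hTpos : (0:ℝ) < (starCount (SimpleGraph.turanGraph n k) (m+1) : ℝ) := by
      by_contra h
      push_neg at h
      have : (starCount (SimpleGraph.turanGraph n k) (m+1) : ℝ) = 0 := le_antisymm h (Nat.cast_nonneg _)
      rw [this, mul_zero] at hTlb
      nlinarith [pow_pos hApos (m+1), (Nat.cast_pos (α := ℝ)).mpr hn0]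
    constructor
    · rw [le_div_iff₀ hTpos, one_mul]
      exact_mod_cast hTle
    · rw [hu]
      have hd : (0:ℝ) < ((n:ℝ)*(1 - 1/k) - (m+2))^(m+1) := pow_pos hApos _
      rw [div_le_div_iff₀ hTpos hd]
      -- E * (A-(m+2))^(m+1) ≤ A^(m+1) * T
      -- from F*E ≤ n*A^(m+1) and n*(A-(m+2))^(m+1) ≤ F*T
      have h1 : ((m+1).factorial : ℝ) * ((exStarCount n (m+1) (SimpleGraph.completeGraph (Fin (k + 1))) : ℝ)
          * ((n:ℝ)*(1 - 1/k) - (m+2))^(m+1))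
          ≤ ((m+1).factorial : ℝ) * (((n:ℝ)*(1 - 1/k))^(m+1)
          * (starCount (SimpleGraph.turanGraph n k) (m+1) : ℝ)) := by
        have hApow : (0:ℝ) ≤ ((n:ℝ)*(1 - 1/k))^(m+1) := by positivity
        have hE0 : (0:ℝ) ≤ (exStarCount n (m+1) (SimpleGraph.completeGraph (Fin (k + 1))) : ℝ) := Nat.cast_nonneg _
        calc ((m+1).factorial : ℝ) * ((exStarCount n (m+1) (SimpleGraph.completeGraph (Fin (k + 1))) : ℝ)
              * ((n:ℝ)*(1 - 1/k) - (m+2))^(m+1))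
            = (((m+1).factorial : ℝ) * (exStarCount n (m+1) (SimpleGraph.completeGraph (Fin (k + 1))) : ℝ))
              * ((n:ℝ)*(1 - 1/k) - (m+2))^(m+1) := by ring
          _ ≤ ((n:ℝ) * ((n:ℝ) - (n:ℝ)/k)^(m+1)) * ((n:ℝ)*(1 - 1/k) - (m+2))^(m+1) :=
              mul_le_mul_of_nonneg_right hEub (le_of_lt hd)
          _ = ((n:ℝ)*(1 - 1/k))^(m+1) * ((n:ℝ) * ((n:ℝ)*(1 - 1/k) - (m+2))^(m+1)) := by
              rw [hAeq]; ring
          _ ≤ ((n:ℝ)*(1 - 1/k))^(m+1) * (((m+1).factorial : ℝ)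
              * (starCount (SimpleGraph.turanGraph n k) (m+1) : ℝ)) :=
              mul_le_mul_of_nonneg_left hTlb hApow
          _ = ((m+1).factorial : ℝ) * (((n:ℝ)*(1 - 1/k))^(m+1)
              * (starCount (SimpleGraph.turanGraph n k) (m+1) : ℝ)) := by ring
      have := le_of_mul_le_mul_left h1 hFpos
      linarith
  -- squeeze
  apply tendsto_of_tendsto_of_tendsto_of_le_of_le' tendsto_const_nhds hu1
  · filter_upwards [hge] with n hn using hn.1
  · filter_upwards [hge] with n hn using hn.2
end

section
/- Let r be a positive integer and let G be a C_4-free graph on n vertices with |E(G)| ≤ ⌊3(n−1)/2⌋ = |E(F_n)|. Then e_r(G) ≤ e_r(F_n). -/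
open Finset

/-- The friendship graph `F_n` on `n` vertices: vertex `0` is adjacent to all other
vertices, and the remaining `n − 1` vertices carry the maximum matching
`{1,2}, {3,4}, …` with `⌊(n−1)/2⌋` edges. -/
def friendshipGraph (n : ℕ) : SimpleGraph (Fin n) :=
  mkGraph (fun v w => v.val = 0 ∨ (v.val % 2 = 1 ∧ w.val = v.val + 1))


open Finset

/-- L0: hockey-stick style lower bound. -/
lemma aux_choose_lb {m N q : ℕ} (h : m ≤ N) :
    m.choose (q+1) + (N - m) * m.choose q ≤ N.choose (q+1) := by
  induction N, h using Nat.le_induction with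
  | base => simp
  | succ N hmN ih =>
    have h1 : m.choose q ≤ N.choose q := Nat.choose_le_choose q hmN
    have h2 : (N+1).choose (q+1) = N.choose q + N.choose (q+1) := Nat.choose_succ_succ N q
    have h3 : (N + 1 - m) = (N - m) + 1 := by omega
    rw [h2, h3]
    nlinarith [ih]

/-- L1: base inequality `6(a-1) C(a,p) ≤ a C(2a-2,p)` for `3 ≤ p ≤ a`. -/
lemma aux_L1 {a p : ℕ} (h3 : 3 ≤ p) (hpa : p ≤ a) :
    6 * (a-1) * a.choose p ≤ a * (2*a-2).choose p := by
  induction p, h3 using Nat.le_induction with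
  | base =>
    -- p = 3, a ≥ 3
    obtain ⟨c, rfl⟩ : ∃ c, a = c + 3 := ⟨a - 3, by omega⟩
    have e1 : (c+3).descFactorial 3 = (c+3)*(c+2)*(c+1) := by
      simp [Nat.descFactorial]; ring
    have e2 : (2*(c+3)-2).descFactorial 3 = (2*c+4)*(2*c+3)*(2*c+2) := by
      have : 2*(c+3)-2 = 2*c+4 := by omega
      rw [this]; simp [Nat.descFactorial]; ring
    have f1 : (c+3).descFactorial 3 = 6 * (c+3).choose 3 := by
      rw [Nat.descFactorial_eq_factorial_mul_choose]; norm_num [Nat.factorial]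
    have f2 : (2*(c+3)-2).descFactorial 3 = 6 * (2*(c+3)-2).choose 3 := by
      rw [Nat.descFactorial_eq_factorial_mul_choose]; norm_num [Nat.factorial]
    have h6 : 6 * (6 * (c+3-1) * (c+3).choose 3) ≤ 6 * ((c+3) * (2*(c+3)-2).choose 3) := by
      calc 6 * (6 * (c+3-1) * (c+3).choose 3) = 6*(c+2) * (6*(c+3).choose 3) := by
            have : c+3-1 = c+2 := by omega
            rw [this]; ring
        _ = 6*(c+2) * ((c+3)*(c+2)*(c+1)) := by rw [← f1, e1]
        _ ≤ (c+3) * ((2*c+4)*(2*c+3)*(2*c+2)) := by nlinarith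
        _ = (c+3) * (6 * (2*(c+3)-2).choose 3) := by rw [← f2, e2]
        _ = 6 * ((c+3) * (2*(c+3)-2).choose 3) := by ring
    omega
  | succ p hp ih =>
    have hpa' : p ≤ a := by omega
    have ih' := ih hpa'
    have key : (6 * (a-1) * a.choose (p+1)) * (p+1) ≤ (a * (2*a-2).choose (p+1)) * (p+1) := by
      calc (6 * (a-1) * a.choose (p+1)) * (p+1) = 6*(a-1) * (a.choose (p+1) * (p+1)) := by ring
        _ = 6*(a-1) * (a.choose p * (a - p)) := by rw [Nat.choose_succ_right_eq]
        _ = (6*(a-1) * a.choose p) * (a-p) := by ring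
        _ ≤ (a * (2*a-2).choose p) * (a-p) := Nat.mul_le_mul_right _ ih'
        _ ≤ (a * (2*a-2).choose p) * (2*a-2-p) := by
            apply Nat.mul_le_mul_left; omega
        _ = a * ((2*a-2).choose p * (2*a-2-p)) := by ring
        _ = a * ((2*a-2).choose (p+1) * (p+1)) := by rw [Nat.choose_succ_right_eq]
        _ = (a * (2*a-2).choose (p+1)) * (p+1) := by ring
    exact Nat.le_of_mul_le_mul_right key (by omega)

/-- L2: `3(n-1) C(a,p) ≤ a C(n-1,p)` when `3 ≤ p ≤ a` and `2a ≤ n+1`. -/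
lemma aux_L2 {a p n : ℕ} (h3 : 3 ≤ p) (hpa : p ≤ a) (hn : 2*a ≤ n+1) :
    3 * (n-1) * a.choose p ≤ a * (n-1).choose p := by
  have hbase : 2*a - 1 ≤ n := by omega
  induction n, hbase using Nat.le_induction with
  | base =>
    have : 2*a-1-1 = 2*a-2 := by omega
    rw [this]
    have : 3 * (2*a-2) = 6 * (a-1) := by omega
    rw [this]
    exact aux_L1 h3 hpa
  | succ n hn' ih =>
    have ih' := ih (by omega)
    obtain ⟨q, rfl⟩ : ∃ q, p = q + 1 := ⟨p - 1, by omega⟩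
    -- 3 C(a,p) ≤ a C(n-1, q) ≤ a C(n-1… need a*C(n-1,p-1)
    have han : a ≤ n - 1 := by omega
    have step : 3 * a.choose (q+1) ≤ a * (n-1).choose q := by
      have k0 : a.choose (q+1) * (q+1) = a.choose q * (a - q) := Nat.choose_succ_right_eq a q
      have k1 : (3 * a.choose (q+1)) * (q+1) = 3 * (a.choose q * (a - q)) := by
        rw [mul_assoc, k0]
      have k2 : 3 * (a.choose q * (a - q)) ≤ (a * a.choose q) * (q+1) := by
        have : 3 * (a - q) ≤ a * (q+1) := by nlinarith [Nat.sub_le a q]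
        calc 3 * (a.choose q * (a-q)) = a.choose q * (3 * (a-q)) := by ring
          _ ≤ a.choose q * (a * (q+1)) := Nat.mul_le_mul_left _ this
          _ = (a * a.choose q) * (q+1) := by ring
      have k3 : a * a.choose q ≤ a * (n-1).choose q :=
        Nat.mul_le_mul_left a (Nat.choose_le_choose q han)
      have := le_trans (k1 ▸ k2) (Nat.mul_le_mul_right (q+1) k3)
      exact Nat.le_of_mul_le_mul_right this (by omega)
    have pascal : (n+1-1).choose (q+1) = (n-1).choose q + (n-1).choose (q+1) := by
      have h1 : n + 1 - 1 = (n-1) + 1 := by omega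
      rw [h1]; exact Nat.choose_succ_succ (n-1) q
    have expand : 3 * (n+1-1) * a.choose (q+1)
        = 3 * a.choose (q+1) + 3 * (n-1) * a.choose (q+1) := by
      have : n + 1 - 1 = (n-1) + 1 := by omega
      rw [this]; ring
    calc 3 * (n+1-1) * a.choose (q+1)
        = 3 * a.choose (q+1) + 3 * (n-1) * a.choose (q+1) := expand
      _ ≤ a * (n-1).choose q + a * (n-1).choose (q+1) := Nat.add_le_add step ih'
      _ = a * ((n-1).choose q + (n-1).choose (q+1)) := by ring
      _ = a * (n+1-1).choose (q+1) := by rw [pascal]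

/-- helper: `2 C(b,p) ≤ b(b-2) C(b,p-2)` for `3 ≤ p ≤ b`. -/
lemma aux_L3h {b q : ℕ} (hq : 1 ≤ q) (hpb : q + 2 ≤ b) :
    2 * b.choose (q+2) ≤ b * (b-2) * b.choose q := by
  have k1 : b.choose (q+2) * (q+2) = b.choose (q+1) * (b - (q+1)) := Nat.choose_succ_right_eq b (q+1)
  have k2 : b.choose (q+1) * (q+1) = b.choose q * (b - q) := Nat.choose_succ_right_eq b q
  have key : (2 * b.choose (q+2)) * ((q+2)*(q+1)) ≤ (b * (b-2) * b.choose q) * ((q+2)*(q+1)) := by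
    calc (2 * b.choose (q+2)) * ((q+2)*(q+1)) = 2 * ((b.choose (q+2) * (q+2)) * (q+1)) := by ring
      _ = 2 * ((b.choose (q+1) * (q+1)) * (b - (q+1))) := by rw [k1]; ring
      _ = 2 * (b.choose q * (b-q) * (b-(q+1))) := by rw [k2]
      _ = b.choose q * (2 * (b-q) * (b-(q+1))) := by ring
      _ ≤ b.choose q * (b * (b-2) * ((q+2)*(q+1))) := by
          apply Nat.mul_le_mul_left
          have h1 : b - q ≤ b - 1 := by omega
          have h2 : b - (q+1) ≤ b - 2 := by omega
          have h3 : 2 * (b-q) * (b - (q+1)) ≤ 2 * (b-1) * (b-2) :=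
            Nat.mul_le_mul (Nat.mul_le_mul_left 2 h1) h2
          refine le_trans h3 ?_
          have h4 : (q+2)*(q+1) ≥ 6 := by nlinarith
          have h5 : 2 * (b-1) ≤ b * 6 := by omega
          calc 2*(b-1)*(b-2) ≤ (b*6) * (b-2) := Nat.mul_le_mul_right _ h5
            _ = b * (b-2) * 6 := by ring
            _ ≤ b * (b-2) * ((q+2)*(q+1)) := Nat.mul_le_mul_left _ h4
      _ = (b * (b-2) * b.choose q) * ((q+2)*(q+1)) := by ring
  exact Nat.le_of_mul_le_mul_right key (by positivity)

/-- L3: subcase B inequality. -/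
lemma aux_L3 {b p n : ℕ} (h3 : 3 ≤ p) (hpb : p ≤ b) (hn : 2*b ≤ n+1) :
    b * (n+1-b).choose p + (2*n-4+b) * b.choose p ≤ b * (n-1).choose p := by
  have hbase : 2*b - 1 ≤ n := by omega
  induction n, hbase using Nat.le_induction with
  | base =>
    have e1 : 2*b-1+1-b = b := by omega
    have e2 : 2*(2*b-1)-4+b = 5*b-6 := by omega
    have e3 : 2*b-1-1 = 2*b-2 := by omega
    rw [e1, e2, e3]
    have : b * b.choose p + (5*b-6) * b.choose p = 6*(b-1) * b.choose p := by
      have hb : 3 ≤ b := by omega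
      rw [← Nat.add_mul]
      congr 1
      omega
    rw [this]
    exact aux_L1 h3 hpb
  | succ n hn' ih =>
    have ih' := ih (by omega)
    obtain ⟨q, rfl⟩ : ∃ q, p = q + 2 := ⟨p - 2, by omega⟩
    have hb2 : b ≥ 3 := by omega
    have npas : (n+1+1-b).choose (q+2) = (n+1-b).choose (q+1) + (n+1-b).choose (q+2) := by
      have : n+1+1-b = (n+1-b)+1 := by omega
      rw [this]; exact Nat.choose_succ_succ _ _
    have mpas : (n+1-1).choose (q+2) = (n-1).choose (q+1) + (n-1).choose (q+2) := by
      have : n+1-1 = (n-1)+1 := by omega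
      rw [this]; exact Nat.choose_succ_succ _ _
    rw [npas, mpas]
    have e4 : 2*(n+1)-4+b = (2*n-4+b) + 2 := by omega
    rw [e4]
    -- suffices: b*C(n+1-b,q+1) + 2*C(b,q+2) ≤ b*C(n-1,q+1)
    have main : b * (n+1-b).choose (q+1) + 2 * b.choose (q+2) ≤ b * (n-1).choose (q+1) := by
      have hle : n+1-b ≤ n-1 := by omega
      have lb := aux_choose_lb (q := q) hle
      have hsub : n - 1 - (n+1-b) = b - 2 := by omega
      rw [hsub] at lb
      have hmono : b.choose q ≤ (n+1-b).choose q := Nat.choose_le_choose q (by omega)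
      have h3h := aux_L3h (b := b) (q := q) (by omega) hpb
      calc b * (n+1-b).choose (q+1) + 2 * b.choose (q+2)
          ≤ b * (n+1-b).choose (q+1) + b * (b-2) * b.choose q := by
            exact Nat.add_le_add_left h3h _
        _ ≤ b * (n+1-b).choose (q+1) + b * (b-2) * (n+1-b).choose q := by
            exact Nat.add_le_add_left (Nat.mul_le_mul_left _ hmono) _
        _ = b * ((n+1-b).choose (q+1) + (b-2) * (n+1-b).choose q) := by ring
        _ ≤ b * (n-1).choose (q+1) := Nat.mul_le_mul_left b lb
    -- combine
    calc b * ((n+1-b).choose (q+1) + (n+1-b).choose (q+2))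
          + ((2*n-4+b) + 2) * b.choose (q+2)
        = (b * (n+1-b).choose (q+1) + 2*b.choose (q+2))
          + (b * (n+1-b).choose (q+2) + (2*n-4+b) * b.choose (q+2)) := by ring
      _ ≤ b * (n-1).choose (q+1) + b * (n-1).choose (q+2) := Nat.add_le_add main ih'
      _ = b * ((n-1).choose (q+1) + (n-1).choose (q+2)) := by ring

/-- The key numeric inequality for the `p ≥ 3` case. -/
lemma aux_key_numeric {n a p : ℕ} (h3 : 3 ≤ p) (hn : 1 ≤ n) (ha : a ≤ n - 1) :
    min a (n+1-a) * a.choose p + (3*(n-1) - a) * (min a (n+1-a)).choose p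
      ≤ min a (n+1-a) * (n-1).choose p := by
  set m := min a (n+1-a) with hm
  by_cases hap : a < p
  · have c1 : a.choose p = 0 := Nat.choose_eq_zero_of_lt hap
    have c2 : m.choose p = 0 := Nat.choose_eq_zero_of_lt (by omega : m < p)
    simp [c1, c2]
  push_neg at hap
  by_cases hbp : n + 1 - a < p
  · have c2 : m.choose p = 0 := Nat.choose_eq_zero_of_lt (by omega : m < p)
    rw [c2, Nat.mul_zero, Nat.add_zero]
    exact Nat.mul_le_mul_left m (Nat.choose_le_choose p ha)
  push_neg at hbp
  by_cases hmid : 2*a ≤ n+1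
  · have hma : m = a := by omega
    rw [hma]
    have : a * a.choose p + (3*(n-1) - a) * a.choose p = 3*(n-1) * a.choose p := by
      rw [← Nat.add_mul]; congr 1; omega
    rw [this]
    exact aux_L2 h3 hap hmid
  · push_neg at hmid
    have hmb : m = n + 1 - a := by omega
    have h1 : n+1-(n+1-a) = a := by omega
    have h2 : 2*n-4+(n+1-a) = 3*(n-1)-a := by omega
    have h5 := aux_L3 (b := n+1-a) (n := n) h3 hbp (by omega)
    rw [h1, h2] at h5
    rw [hmb]
    exact h5


/-- Coefficients expressing `x^r` in the binomial basis: `a_{r,p} = p! * S(r,p)`. -/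
def auxA : ℕ → ℕ → ℕ
  | 0, 0 => 1
  | 0, _+1 => 0
  | _+1, 0 => 0
  | r+1, p+1 => (p+1) * (auxA r (p+1) + auxA r p)

lemma auxA_eq_zero : ∀ r p : ℕ, r < p → auxA r p = 0
  | 0, 0 => by omega
  | 0, p+1 => fun _ => rfl
  | r+1, 0 => by omega
  | r+1, p+1 => fun h => by
      have h1 : auxA r (p+1) = 0 := auxA_eq_zero r (p+1) (by omega)
      have h2 : auxA r p = 0 := auxA_eq_zero r p (by omega)
      show (p+1) * (auxA r (p+1) + auxA r p) = 0
      rw [h1, h2]; rfl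

lemma aux_mul_choose (x p : ℕ) :
    x * x.choose p = p * x.choose p + (p+1) * x.choose (p+1) := by
  have k : x.choose (p+1) * (p+1) = x.choose p * (x - p) := Nat.choose_succ_right_eq x p
  rcases le_or_gt p x with h | h
  · have : (p+1) * x.choose (p+1) = (x - p) * x.choose p := by
      rw [mul_comm, k, mul_comm]
    rw [this, ← Nat.add_mul]
    have : p + (x - p) = x := by omega
    rw [this]
  · rw [Nat.choose_eq_zero_of_lt h, Nat.choose_eq_zero_of_lt (by omega)]
    simp

lemma aux_pow_eq_sum_choose (r x : ℕ) :
    x ^ r = ∑ p ∈ range (r+1), auxA r p * x.choose p := by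
  induction r with
  | zero => simp [auxA]
  | succ r ih =>
    have expand : x ^ (r+1) = ∑ p ∈ range (r+1),
        (auxA r p * (p * x.choose p) + auxA r p * ((p+1) * x.choose (p+1))) := by
      rw [pow_succ, ih, Finset.sum_mul]
      refine Finset.sum_congr rfl fun p _ => ?_
      rw [mul_assoc, mul_comm (x.choose p) x, aux_mul_choose, Nat.mul_add]
    rw [expand, Finset.sum_add_distrib]
    -- RHS: ∑ p in range (r+2), auxA (r+1) p * x.choose p
    have rhs : ∑ p ∈ range (r+2), auxA (r+1) p * x.choose p
        = ∑ p ∈ range (r+1), auxA (r+1) (p+1) * x.choose (p+1) := by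
      rw [Finset.sum_range_succ' _ (r+1)]
      show _ = _
      have : auxA (r+1) 0 * x.choose 0 = 0 := by simp [auxA]
      rw [this, Nat.add_zero]
    rw [rhs]
    have split : ∀ p, auxA (r+1) (p+1) * x.choose (p+1)
        = (p+1) * auxA r (p+1) * x.choose (p+1) + auxA r p * ((p+1) * x.choose (p+1)) := by
      intro p
      show (p+1) * (auxA r (p+1) + auxA r p) * x.choose (p+1) = _
      ring
    rw [Finset.sum_congr rfl (fun p _ => split p), Finset.sum_add_distrib]
    congr 1
    -- ∑ p in range (r+1), auxA r p * (p * x.choose p) = ∑ p in range (r+1), (p+1)*auxA r (p+1)*x.choose (p+1)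
    rw [Finset.sum_range_succ' (fun p => auxA r p * (p * x.choose p)) r]
    simp only [Nat.mul_zero, Nat.zero_mul, mul_zero, Nat.add_zero]
    rw [Finset.sum_range_succ]
    have : auxA r (r+1) = 0 := auxA_eq_zero r (r+1) (by omega)
    rw [this]
    simp only [Nat.zero_mul, mul_zero, Nat.mul_zero, Nat.add_zero, zero_mul, add_zero]
    refine Finset.sum_congr rfl fun p _ => by ring

section AuxGraph

open SimpleGraph

variable {n : ℕ} {G : SimpleGraph (Fin n)}

lemma aux_c4 (hfree : ¬ Contains (SimpleGraph.cycleGraph 4) G)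
    {x y v w : Fin n} (hxy : x ≠ y) (hvw : v ≠ w)
    (h1 : G.Adj v x) (h2 : G.Adj v y) (h3 : G.Adj w x) (h4 : G.Adj w y) : False := by
  apply hfree
  have hvx : v ≠ x := h1.ne
  have hvy : v ≠ y := h2.ne
  have hwx : w ≠ x := h3.ne
  have hwy : w ≠ y := h4.ne
  have hxv : x ≠ v := hvx.symm
  have hyv : y ≠ v := hvy.symm
  have hxw : x ≠ w := hwx.symm
  have hyw : y ≠ w := hwy.symm
  have hyx : y ≠ x := hxy.symm
  have hwv : w ≠ v := hvw.symm
  refine ⟨⟨![x, v, y, w], ?_⟩, ?_⟩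
  · intro i j hij
    fin_cases i <;> fin_cases j <;> simp_all
  · intro a b hab
    rw [SimpleGraph.cycleGraph_adj'] at hab
    fin_cases a <;> fin_cases b <;>
      simp only [Matrix.cons_val_zero, Matrix.cons_val_one, Matrix.head_cons,
        Matrix.cons_val_two, Matrix.tail_cons, Matrix.cons_val_three] <;>
      first
        | exact absurd hab (by decide)
        | exact h1
        | exact h1.symm
        | exact h2
        | exact h2.symm
        | exact h3
        | exact h3.symm
        | exact h4
        | exact h4.symm

lemma aux_common [DecidableRel G.Adj] (hfree : ¬ Contains (SimpleGraph.cycleGraph 4) G)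
    {x y : Fin n} (hxy : x ≠ y) :
    (G.neighborFinset x ∩ G.neighborFinset y).card ≤ 1 := by
  by_contra h
  push_neg at h
  obtain ⟨v, hv, w, hw, hvw⟩ := Finset.one_lt_card.mp h
  simp only [Finset.mem_inter, SimpleGraph.mem_neighborFinset] at hv hw
  exact aux_c4 hfree hxy hvw hv.1.symm hv.2.symm hw.1.symm hw.2.symm

lemma aux_deg_pair [DecidableRel G.Adj] (hfree : ¬ Contains (SimpleGraph.cycleGraph 4) G)
    {x y : Fin n} (hxy : x ≠ y) :
    G.degree x + G.degree y ≤ n + 1 := by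
  have hun : (G.neighborFinset x ∪ G.neighborFinset y).card ≤ n := by
    simpa using Finset.card_le_univ (G.neighborFinset x ∪ G.neighborFinset y)
  have hint := aux_common hfree hxy
  have hsum := Finset.card_union_add_card_inter (G.neighborFinset x) (G.neighborFinset y)
  have hdx : G.degree x = (G.neighborFinset x).card := rfl
  have hdy : G.degree y = (G.neighborFinset y).card := rfl
  omega

lemma aux_deg_le [DecidableRel G.Adj] (v : Fin n) : G.degree v ≤ n - 1 := by
  have h := G.degree_lt_card_verts v
  rw [Fintype.card_fin] at h
  omega

lemma aux_handshake [DecidableRel G.Adj] : ∑ v : Fin n, G.degree v = 2 * edgeCount G := by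
  have h : edgeCount G = G.edgeFinset.card := by
    rw [edgeCount, Set.ncard_eq_toFinset_card']
    congr 1
  rw [h]
  exact SimpleGraph.sum_degrees_eq_twice_card_edges G

lemma aux_ncard_deg [DecidableRel G.Adj] (v : Fin n) :
    (G.neighborSet v).ncard = G.degree v := by
  rw [Set.ncard_eq_toFinset_card']
  rfl

lemma aux_choose_two_expand [DecidableRel G.Adj] :
    ∑ v : Fin n, (G.degree v).choose 2
      = ∑ s ∈ (Finset.univ : Finset (Fin n)).powersetCard 2,
          (Finset.univ.filter (fun v => s ⊆ G.neighborFinset v)).card := by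
  have key : ∀ v : Fin n, (G.degree v).choose 2
      = ∑ s ∈ (Finset.univ : Finset (Fin n)).powersetCard 2,
          (if s ⊆ G.neighborFinset v then 1 else 0) := by
    intro v
    have e0 : (G.neighborFinset v).powersetCard 2
        = ((Finset.univ : Finset (Fin n)).powersetCard 2).filter
            (fun s => s ⊆ G.neighborFinset v) := by
      ext s
      simp only [Finset.mem_powersetCard, Finset.mem_filter, Finset.subset_univ, true_and]
      tauto
    rw [show (G.degree v) = (G.neighborFinset v).card from rfl,
      ← Finset.card_powersetCard 2 (G.neighborFinset v), e0, Finset.card_filter]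
  simp_rw [key]
  rw [Finset.sum_comm]
  exact Finset.sum_congr rfl fun s _ => (Finset.card_filter _ _).symm

lemma aux_filter_common [DecidableRel G.Adj] {x y : Fin n} (hxy : x ≠ y) :
    (Finset.univ.filter (fun v => ({x, y} : Finset (Fin n)) ⊆ G.neighborFinset v))
      = G.neighborFinset x ∩ G.neighborFinset y := by
  ext v
  simp only [Finset.mem_filter, Finset.mem_univ, true_and, Finset.insert_subset_iff,
    Finset.singleton_subset_iff, Finset.mem_inter, SimpleGraph.mem_neighborFinset]
  constructor
  · rintro ⟨h1, h2⟩; exact ⟨h1.symm, h2.symm⟩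
  · rintro ⟨h1, h2⟩; exact ⟨h1.symm, h2.symm⟩

lemma aux_sum_choose_two [DecidableRel G.Adj]
    (hfree : ¬ Contains (SimpleGraph.cycleGraph 4) G) :
    ∑ v : Fin n, (G.degree v).choose 2 ≤ n.choose 2 := by
  rw [aux_choose_two_expand]
  have bound : ∀ s ∈ (Finset.univ : Finset (Fin n)).powersetCard 2,
      (Finset.univ.filter (fun v => s ⊆ G.neighborFinset v)).card ≤ 1 := by
    intro s hs
    obtain ⟨x, y, hxy, rfl⟩ := Finset.card_eq_two.mp (Finset.mem_powersetCard.mp hs).2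
    rw [aux_filter_common hxy]
    exact aux_common hfree hxy
  calc ∑ s ∈ (Finset.univ : Finset (Fin n)).powersetCard 2,
        (Finset.univ.filter (fun v => s ⊆ G.neighborFinset v)).card
      ≤ ∑ _s ∈ (Finset.univ : Finset (Fin n)).powersetCard 2, 1 := Finset.sum_le_sum bound
    _ = n.choose 2 := by
        rw [Finset.sum_const, smul_eq_mul, mul_one]
        rw [Finset.card_powersetCard, Finset.card_univ, Fintype.card_fin]

lemma aux_sum_choose_two_strict [DecidableRel G.Adj]
    (hfree : ¬ Contains (SimpleGraph.cycleGraph 4) G)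
    (hnot : ¬ ∀ x y : Fin n, x ≠ y → ∃ v, G.Adj v x ∧ G.Adj v y) :
    ∑ v : Fin n, (G.degree v).choose 2 + 1 ≤ n.choose 2 := by
  push_neg at hnot
  obtain ⟨x, y, hxy, hno⟩ := hnot
  rw [aux_choose_two_expand]
  have bound : ∀ s ∈ (Finset.univ : Finset (Fin n)).powersetCard 2,
      (Finset.univ.filter (fun v => s ⊆ G.neighborFinset v)).card ≤ 1 := by
    intro s hs
    obtain ⟨a, b, hab, rfl⟩ := Finset.card_eq_two.mp (Finset.mem_powersetCard.mp hs).2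
    rw [aux_filter_common hab]
    exact aux_common hfree hab
  have hmem : ({x, y} : Finset (Fin n)) ∈ (Finset.univ : Finset (Fin n)).powersetCard 2 := by
    rw [Finset.mem_powersetCard]
    exact ⟨Finset.subset_univ _, Finset.card_pair hxy⟩
  have hzero : (Finset.univ.filter
      (fun v => ({x, y} : Finset (Fin n)) ⊆ G.neighborFinset v)).card = 0 := by
    rw [Finset.card_eq_zero, Finset.eq_empty_iff_forall_notMem]
    intro v hv
    rw [aux_filter_common hxy, Finset.mem_inter] at hv
    simp only [SimpleGraph.mem_neighborFinset] at hv
    exact hno v hv.1.symm hv.2.symm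
  have hlt : ∑ s ∈ (Finset.univ : Finset (Fin n)).powersetCard 2,
      (Finset.univ.filter (fun v => s ⊆ G.neighborFinset v)).card
      < ∑ _s ∈ (Finset.univ : Finset (Fin n)).powersetCard 2, 1 := by
    apply Finset.sum_lt_sum bound
    exact ⟨_, hmem, by rw [hzero]; norm_num⟩
  have : ∑ _s ∈ (Finset.univ : Finset (Fin n)).powersetCard 2, 1 = n.choose 2 := by
    rw [Finset.sum_const, smul_eq_mul, mul_one]
    rw [Finset.card_powersetCard, Finset.card_univ, Fintype.card_fin]
  omega

lemma aux_min_edges [DecidableRel G.Adj] (hn : 2 ≤ n)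
    (hcom : ∀ x y : Fin n, x ≠ y → ∃ v, G.Adj v x ∧ G.Adj v y) :
    3 * (n-1) ≤ ∑ v : Fin n, G.degree v := by
  have hn0 : 0 < n := by omega
  set z : Fin n := ⟨0, hn0⟩ with hzdef
  set Nz := G.neighborFinset z with hNzdef
  set W := (Finset.univ.erase z) \ Nz with hWdef
  have hNsub : Nz ⊆ Finset.univ.erase z := by
    intro u hu
    rw [Finset.mem_erase]
    rw [hNzdef, SimpleGraph.mem_neighborFinset] at hu
    exact ⟨hu.ne', Finset.mem_univ u⟩
  have hsplit : Finset.univ.erase z = Nz ∪ W := by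
    rw [hWdef, Finset.union_sdiff_of_subset hNsub]
  have hdisj : Disjoint Nz W := Finset.disjoint_sdiff
  have hWz : ∀ w ∈ W, w ≠ z := fun w hw =>
    (Finset.mem_erase.mp (Finset.mem_sdiff.mp hw).1).1
  -- degree lower bound on W
  have hW2 : ∀ w ∈ W, 2 ≤ G.degree w := by
    intro w hw
    obtain ⟨x, hx1, _⟩ := hcom w z (hWz w hw)
    obtain ⟨u, hu1, hu2⟩ := hcom w x hx1.ne'
    have hx : x ∈ G.neighborFinset w := by
      rw [SimpleGraph.mem_neighborFinset]; exact hx1.symm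
    have hu : u ∈ G.neighborFinset w := by
      rw [SimpleGraph.mem_neighborFinset]; exact hu1.symm
    exact Finset.one_lt_card.mpr ⟨x, hx, u, hu, hu2.ne'⟩
  -- degree lower bound on Nz
  have hNz2 : ∀ x ∈ Nz, 2 + (G.neighborFinset x ∩ W).card ≤ G.degree x := by
    intro x hx
    have hadjzx : G.Adj z x := by rwa [hNzdef, SimpleGraph.mem_neighborFinset] at hx
    obtain ⟨u, hu1, hu2⟩ := hcom x z hadjzx.ne'
    set A := G.neighborFinset x ∩ (insert z Nz) with hAdef
    set B := G.neighborFinset x ∩ W with hBdef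
    have hdisjAB : Disjoint A B := by
      apply Finset.disjoint_left.mpr
      intro t htA htB
      rw [hAdef, Finset.mem_inter, Finset.mem_insert] at htA
      rw [hBdef, Finset.mem_inter, hWdef, Finset.mem_sdiff, Finset.mem_erase] at htB
      rcases htA.2 with h | h
      · exact htB.2.1.1 h
      · exact htB.2.2 h
    have hsubAB : A ∪ B ⊆ G.neighborFinset x := by
      intro t ht
      rcases Finset.mem_union.mp ht with h | h
      · exact (Finset.mem_inter.mp h).1
      · exact (Finset.mem_inter.mp h).1
    have hA2 : 2 ≤ A.card := by
      have hzA : z ∈ A := by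
        rw [hAdef, Finset.mem_inter, SimpleGraph.mem_neighborFinset]
        exact ⟨hadjzx.symm, Finset.mem_insert_self _ _⟩
      have huA : u ∈ A := by
        rw [hAdef, Finset.mem_inter, SimpleGraph.mem_neighborFinset]
        refine ⟨hu1.symm, Finset.mem_insert_of_mem ?_⟩
        rw [hNzdef, SimpleGraph.mem_neighborFinset]
        exact hu2.symm
      exact Finset.one_lt_card.mpr ⟨z, hzA, u, huA, hu2.ne.symm⟩
    calc 2 + B.card ≤ A.card + B.card := by omega
      _ = (A ∪ B).card := (Finset.card_union_of_disjoint hdisjAB).symm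
      _ ≤ (G.neighborFinset x).card := Finset.card_le_card hsubAB
      _ = G.degree x := rfl
  -- double counting
  have hswap : ∑ x ∈ Nz, (G.neighborFinset x ∩ W).card
      = ∑ w ∈ W, (G.neighborFinset w ∩ Nz).card := by
    have e1 : ∀ x ∈ Nz, (G.neighborFinset x ∩ W).card
        = ∑ w ∈ W, (if G.Adj x w then 1 else 0) := by
      intro x _
      rw [Finset.inter_comm, ← Finset.filter_mem_eq_inter, Finset.card_filter]
      refine Finset.sum_congr rfl fun w _ => by
        simp [SimpleGraph.mem_neighborFinset]
    have e2 : ∀ w ∈ W, (G.neighborFinset w ∩ Nz).card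
        = ∑ x ∈ Nz, (if G.Adj x w then 1 else 0) := by
      intro w _
      rw [Finset.inter_comm, ← Finset.filter_mem_eq_inter, Finset.card_filter]
      refine Finset.sum_congr rfl fun x _ => by
        simp [SimpleGraph.mem_neighborFinset, SimpleGraph.adj_comm]
    rw [Finset.sum_congr rfl e1, Finset.sum_congr rfl e2, Finset.sum_comm]
  have hWcom1 : ∀ w ∈ W, 1 ≤ (G.neighborFinset w ∩ Nz).card := by
    intro w hw
    obtain ⟨v, hv1, hv2⟩ := hcom w z (hWz w hw)
    apply Finset.card_pos.mpr
    refine ⟨v, ?_⟩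
    rw [Finset.mem_inter, SimpleGraph.mem_neighborFinset, hNzdef,
      SimpleGraph.mem_neighborFinset]
    exact ⟨hv1.symm, hv2.symm⟩
  -- totals
  have hNzsum : 2 * Nz.card + W.card ≤ ∑ x ∈ Nz, G.degree x := by
    calc 2 * Nz.card + W.card
        = ∑ x ∈ Nz, 2 + ∑ w ∈ W, 1 := by
          rw [Finset.sum_const, Finset.sum_const]; simp [Nat.mul_comm]
      _ ≤ ∑ x ∈ Nz, 2 + ∑ w ∈ W, (G.neighborFinset w ∩ Nz).card :=
          Nat.add_le_add_left (Finset.sum_le_sum hWcom1) _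
      _ = ∑ x ∈ Nz, 2 + ∑ x ∈ Nz, (G.neighborFinset x ∩ W).card := by rw [hswap]
      _ = ∑ x ∈ Nz, (2 + (G.neighborFinset x ∩ W).card) := by
          rw [Finset.sum_add_distrib]
      _ ≤ ∑ x ∈ Nz, G.degree x := Finset.sum_le_sum hNz2
  have hWsum : 2 * W.card ≤ ∑ w ∈ W, G.degree w := by
    calc 2 * W.card = ∑ w ∈ W, 2 := by rw [Finset.sum_const]; simp [Nat.mul_comm]
      _ ≤ ∑ w ∈ W, G.degree w := Finset.sum_le_sum hW2
  have htotal : ∑ v : Fin n, G.degree v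
      = G.degree z + (∑ x ∈ Nz, G.degree x + ∑ w ∈ W, G.degree w) := by
    have h1 : ∑ v : Fin n, G.degree v
        = G.degree z + ∑ x ∈ Finset.univ.erase z, G.degree x :=
      (Finset.add_sum_erase _ (fun v => G.degree v) (Finset.mem_univ z)).symm
    rw [h1, hsplit, Finset.sum_union hdisj]
  have hcards : Nz.card + W.card = n - 1 := by
    have h1 : (Finset.univ.erase z).card = n - 1 := by
      rw [Finset.card_erase_of_mem (Finset.mem_univ z), Finset.card_univ, Fintype.card_fin]
    rw [← h1, hsplit, Finset.card_union_of_disjoint hdisj]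
  have hdz : G.degree z = Nz.card := rfl
  omega

lemma aux_choose_ratio {x m p : ℕ} (hx : x ≤ m) (hp : 1 ≤ p) :
    m * x.choose p ≤ x * m.choose p := by
  obtain ⟨q, rfl⟩ : ∃ q, p = q + 1 := ⟨p - 1, by omega⟩
  rcases Nat.eq_zero_or_pos x with rfl | hx0
  · simp
  obtain ⟨x', rfl⟩ : ∃ x', x = x' + 1 := ⟨x - 1, by omega⟩
  obtain ⟨m', rfl⟩ : ∃ m', m = m' + 1 := ⟨m - 1, by omega⟩
  have k1 : (x'+1) * x'.choose q = (x'+1).choose (q+1) * (q+1) := Nat.add_one_mul_choose_eq x' q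
  have k2 : (m'+1) * m'.choose q = (m'+1).choose (q+1) * (q+1) := Nat.add_one_mul_choose_eq m' q
  have key : ((m'+1) * (x'+1).choose (q+1)) * (q+1) ≤ ((x'+1) * (m'+1).choose (q+1)) * (q+1) := by
    calc ((m'+1) * (x'+1).choose (q+1)) * (q+1) = (m'+1) * ((x'+1).choose (q+1) * (q+1)) := by ring
      _ = (m'+1) * ((x'+1) * x'.choose q) := by rw [k1]
      _ = ((m'+1) * (x'+1)) * x'.choose q := by ring
      _ ≤ ((m'+1) * (x'+1)) * m'.choose q := by
          exact Nat.mul_le_mul_left _ (Nat.choose_le_choose q (by omega))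
      _ = (x'+1) * ((m'+1) * m'.choose q) := by ring
      _ = (x'+1) * ((m'+1).choose (q+1) * (q+1)) := by rw [k2]
      _ = ((x'+1) * (m'+1).choose (q+1)) * (q+1) := by ring
  exact Nat.le_of_mul_le_mul_right key (by omega)

lemma aux_sum_choose_p [DecidableRel G.Adj]
    (hfree : ¬ Contains (SimpleGraph.cycleGraph 4) G)
    {p : ℕ} (hp : 3 ≤ p) (hn : 1 ≤ n)
    (hsum : ∑ v : Fin n, G.degree v ≤ 3 * (n-1)) :
    ∑ v : Fin n, (G.degree v).choose p ≤ (n-1).choose p := by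
  obtain ⟨v₀, -, hmax⟩ := Finset.exists_max_image (α := ℕ) (β := Fin n)
    Finset.univ (fun v => G.degree v) ⟨⟨0, by omega⟩, Finset.mem_univ _⟩
  set a := G.degree v₀ with hadef
  have ha : a ≤ n - 1 := aux_deg_le v₀
  set m := min a (n+1-a) with hmdef
  rcases Nat.eq_zero_or_pos m with hm | hm
  · have ha0 : a = 0 := by omega
    have : ∀ v : Fin n, (G.degree v).choose p = 0 := by
      intro v
      have : G.degree v = 0 := by
        have := hmax v (Finset.mem_univ v); omega
      rw [this, Nat.choose_eq_zero_of_lt (by omega)]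
    rw [Finset.sum_congr rfl fun v _ => this v]
    simp
  · have hsplit : ∑ v : Fin n, (G.degree v).choose p
        = a.choose p + ∑ v ∈ Finset.univ.erase v₀, (G.degree v).choose p :=
      (Finset.add_sum_erase _ (fun v => (G.degree v).choose p) (Finset.mem_univ v₀)).symm
    have hsplitd : ∑ v : Fin n, G.degree v
        = a + ∑ v ∈ Finset.univ.erase v₀, G.degree v :=
      (Finset.add_sum_erase _ (fun v => G.degree v) (Finset.mem_univ v₀)).symm
    have hrest : ∀ v ∈ Finset.univ.erase v₀, G.degree v ≤ m := by
      intro v hv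
      have h1 : G.degree v ≤ a := hmax v (Finset.mem_univ v)
      have h2 : G.degree v + a ≤ n + 1 :=
        aux_deg_pair hfree (Finset.ne_of_mem_erase hv)
      omega
    have main : m * ∑ v : Fin n, (G.degree v).choose p ≤ m * (n-1).choose p := by
      calc m * ∑ v : Fin n, (G.degree v).choose p
          = m * a.choose p + ∑ v ∈ Finset.univ.erase v₀, m * (G.degree v).choose p := by
            rw [hsplit, Nat.mul_add, Finset.mul_sum]
        _ ≤ m * a.choose p + ∑ v ∈ Finset.univ.erase v₀, G.degree v * m.choose p := by
            refine Nat.add_le_add_left (Finset.sum_le_sum fun v hv => ?_) _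
            exact aux_choose_ratio (hrest v hv) (by omega)
        _ = m * a.choose p + (∑ v ∈ Finset.univ.erase v₀, G.degree v) * m.choose p := by
            rw [Finset.sum_mul]
        _ ≤ m * a.choose p + (3*(n-1) - a) * m.choose p := by
            refine Nat.add_le_add_left (Nat.mul_le_mul_right _ ?_) _
            omega
        _ ≤ m * (n-1).choose p := aux_key_numeric hp hn ha
    exact Nat.le_of_mul_le_mul_left (by rwa [hmdef] at main) hm

end AuxGraph

section AuxFriend

open SimpleGraph

lemma friend_adj {n : ℕ} (v w : Fin n) :
    (friendshipGraph n).Adj v w ↔ v ≠ w ∧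
      ((v.val = 0 ∨ (v.val % 2 = 1 ∧ w.val = v.val + 1)) ∨
       (w.val = 0 ∨ (w.val % 2 = 1 ∧ v.val = w.val + 1))) :=
  Iff.rfl

lemma friend_deg_zero {n : ℕ} [DecidableRel (friendshipGraph n).Adj] (hn : 0 < n) :
    (friendshipGraph n).degree ⟨0, hn⟩ = n - 1 := by
  have hset : (friendshipGraph n).neighborFinset ⟨0, hn⟩ = Finset.univ.erase ⟨0, hn⟩ := by
    ext w
    rw [SimpleGraph.mem_neighborFinset, friend_adj, Finset.mem_erase]
    have hw := w.isLt
    simp only [Finset.mem_univ, and_true, Ne, Fin.ext_iff, Fin.val_mk, true_or, or_true, true_and]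
    omega
  show ((friendshipGraph n).neighborFinset ⟨0, hn⟩).card = n - 1
  rw [hset, Finset.card_erase_of_mem (Finset.mem_univ _), Finset.card_univ, Fintype.card_fin]

lemma friend_deg_last {n : ℕ} [DecidableRel (friendshipGraph n).Adj] (v : Fin n)
    (hv : v.val ≠ 0) (hodd : v.val % 2 = 1) (hlast : v.val + 1 = n) :
    (friendshipGraph n).degree v = 1 := by
  have hn : 0 < n := by omega
  have hset : (friendshipGraph n).neighborFinset v = {⟨0, hn⟩} := by
    ext w
    rw [SimpleGraph.mem_neighborFinset, friend_adj, Finset.mem_singleton]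
    have hw := w.isLt
    have hv2 := v.isLt
    simp only [Ne, Fin.ext_iff, Fin.val_mk]
    omega
  show ((friendshipGraph n).neighborFinset v).card = 1
  rw [hset, Finset.card_singleton]

lemma friend_deg_two {n : ℕ} [DecidableRel (friendshipGraph n).Adj] (v : Fin n)
    (hv : v.val ≠ 0) (hnot : ¬ (v.val % 2 = 1 ∧ v.val + 1 = n)) :
    (friendshipGraph n).degree v = 2 := by
  have hn : 0 < n := by omega
  have hv' := v.isLt
  rcases Nat.mod_two_eq_zero_or_one v.val with hpar | hpar
  · -- even: partner is v-1
    have hub : v.val - 1 < n := by omega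
    have hset : (friendshipGraph n).neighborFinset v = {⟨0, hn⟩, ⟨v.val - 1, hub⟩} := by
      ext w
      rw [SimpleGraph.mem_neighborFinset, friend_adj, Finset.mem_insert, Finset.mem_singleton]
      have hw := w.isLt
      simp only [Ne, Fin.ext_iff, Fin.val_mk]
      omega
    show ((friendshipGraph n).neighborFinset v).card = 2
    rw [hset]
    rw [Finset.card_pair (by simp only [Ne, Fin.ext_iff, Fin.val_mk]; omega)]
  · -- odd: partner is v+1, and v+1 < n
    have hub : v.val + 1 < n := by omega
    have hset : (friendshipGraph n).neighborFinset v = {⟨0, hn⟩, ⟨v.val + 1, hub⟩} := by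
      ext w
      rw [SimpleGraph.mem_neighborFinset, friend_adj, Finset.mem_insert, Finset.mem_singleton]
      have hw := w.isLt
      simp only [Ne, Fin.ext_iff, Fin.val_mk]
      omega
    show ((friendshipGraph n).neighborFinset v).card = 2
    rw [hset]
    rw [Finset.card_pair (by simp only [Ne, Fin.ext_iff, Fin.val_mk]; omega)]

lemma friend_sum {n : ℕ} [DecidableRel (friendshipGraph n).Adj] (g : ℕ → ℕ) (hn : 1 ≤ n) :
    ∑ v : Fin n, g ((friendshipGraph n).degree v)
      = g (n-1) + (n - 1 - (n-1) % 2) * g 2 + ((n-1) % 2) * g 1 := by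
  have hn0 : 0 < n := hn
  set z : Fin n := ⟨0, hn0⟩ with hzdef
  have hsp : ∑ v : Fin n, g ((friendshipGraph n).degree v)
      = g ((friendshipGraph n).degree z)
        + ∑ v ∈ Finset.univ.erase z, g ((friendshipGraph n).degree v) :=
    (Finset.add_sum_erase _ (fun v => g ((friendshipGraph n).degree v))
      (Finset.mem_univ z)).symm
  rw [hsp, friend_deg_zero hn0]
  rcases Nat.mod_two_eq_zero_or_one n with hpar | hpar
  · -- n even: special last vertex
    have hn2 : 2 ≤ n := by omega
    have hL : n - 1 < n := by omega
    set L : Fin n := ⟨n-1, hL⟩ with hLdef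
    have hLz : L ∈ Finset.univ.erase z := by
      rw [Finset.mem_erase]
      refine ⟨?_, Finset.mem_univ _⟩
      simp only [Ne, Fin.ext_iff, hLdef, hzdef]
      omega
    have hsp2 : ∑ v ∈ Finset.univ.erase z, g ((friendshipGraph n).degree v)
        = g ((friendshipGraph n).degree L)
          + ∑ v ∈ (Finset.univ.erase z).erase L, g ((friendshipGraph n).degree v) :=
      (Finset.add_sum_erase _ (fun v => g ((friendshipGraph n).degree v)) hLz).symm
    rw [hsp2]
    have hdL : (friendshipGraph n).degree L = 1 := by
      apply friend_deg_last L (by simp [hLdef]; omega) (by simp [hLdef]; omega)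
        (by simp [hLdef]; omega)
    rw [hdL]
    have hrest : ∀ v ∈ (Finset.univ.erase z).erase L,
        g ((friendshipGraph n).degree v) = g 2 := by
      intro v hv
      have h1 : v ≠ L := (Finset.mem_erase.mp hv).1
      have h2 : v ≠ z := (Finset.mem_erase.mp (Finset.mem_erase.mp hv).2).1
      have h1' : v.val ≠ n - 1 := by
        intro h; apply h1; apply Fin.ext; rw [h]
      have h2' : v.val ≠ 0 := by
        intro h; apply h2; apply Fin.ext; rw [h]
      rw [friend_deg_two v h2' (by omega)]
    rw [Finset.sum_congr rfl hrest, Finset.sum_const]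
    have hcard : ((Finset.univ.erase z).erase L).card = n - 2 := by
      rw [Finset.card_erase_of_mem hLz, Finset.card_erase_of_mem (Finset.mem_univ z),
        Finset.card_univ, Fintype.card_fin]
      omega
    rw [hcard]
    have he : (n-1) % 2 = 1 := by omega
    rw [he]
    have : n - 1 - 1 = n - 2 := by omega
    rw [this]
    ring
  · -- n odd
    have hrest : ∀ v ∈ Finset.univ.erase z,
        g ((friendshipGraph n).degree v) = g 2 := by
      intro v hv
      have h2 : v ≠ z := (Finset.mem_erase.mp hv).1
      have h2' : v.val ≠ 0 := by
        intro h; apply h2; apply Fin.ext; rw [h]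
      have hv' := v.isLt
      rw [friend_deg_two v h2' (by omega)]
    rw [Finset.sum_congr rfl hrest, Finset.sum_const]
    have hcard : (Finset.univ.erase z).card = n - 1 := by
      rw [Finset.card_erase_of_mem (Finset.mem_univ z), Finset.card_univ, Fintype.card_fin]
    rw [hcard]
    have he : (n-1) % 2 = 0 := by omega
    rw [he]
    have : n - 1 - 0 = n - 1 := by omega
    rw [this]
    ring

end AuxFriend

/-- For any `C_4`-free graph `G` on `n` vertices with
`|E(G)| ≤ ⌊3(n−1)/2⌋ = |E(F_n)|`, we have `e_r(G) ≤ e_r(F_n)`. -/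
theorem stmt_5 (r n : ℕ) (hr : 1 ≤ r) (G : SimpleGraph (Fin n))
    (hfree : ¬ Contains (SimpleGraph.cycleGraph 4) G)
    (hE : edgeCount G ≤ 3 * (n - 1) / 2) :
    edgeCount (friendshipGraph n) = 3 * (n - 1) / 2 ∧
      degPow G r ≤ degPow (friendshipGraph n) r := by
  haveI : DecidableRel G.Adj := Classical.decRel _
  haveI : DecidableRel (friendshipGraph n).Adj := Classical.decRel _
  rcases Nat.eq_zero_or_pos n with rfl | hn
  · constructor
    · have h := aux_handshake (G := friendshipGraph 0)
      simp only [Finset.univ_eq_empty, Finset.sum_empty] at h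
      omega
    · simp [degPow]
  -- main case : 1 ≤ n
  have hFsum : ∑ v : Fin n, (friendshipGraph n).degree v
      = (n-1) + (n - 1 - (n-1) % 2) * 2 + ((n-1) % 2) * 1 := by
    simpa using friend_sum (g := fun x => x) hn
  have hmod : (n - 1) % 2 ≤ n - 1 := Nat.mod_le _ _
  have hFedge : edgeCount (friendshipGraph n) = 3 * (n - 1) / 2 := by
    have h := aux_handshake (G := friendshipGraph n)
    rw [hFsum] at h
    omega
  refine ⟨hFedge, ?_⟩
  -- degree sums
  have hGsum : ∑ v : Fin n, G.degree v = 2 * edgeCount G := aux_handshake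
  have hGsum3 : ∑ v : Fin n, G.degree v ≤ 3 * (n-1) := by omega
  -- star count comparison
  have key : ∀ p : ℕ, ∑ v : Fin n, (G.degree v).choose p
      ≤ ∑ v : Fin n, ((friendshipGraph n).degree v).choose p := by
    intro p
    have hFp : ∑ v : Fin n, ((friendshipGraph n).degree v).choose p
        = (n-1).choose p + (n - 1 - (n-1) % 2) * (Nat.choose 2 p)
          + ((n-1) % 2) * (Nat.choose 1 p) :=
      friend_sum (g := fun x => x.choose p) hn
    match p with
    | 0 =>
      simp only [Nat.choose_zero_right, Finset.sum_const, Finset.card_univ,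
        Fintype.card_fin, smul_eq_mul, Nat.mul_one] at hFp ⊢
      omega
    | 1 =>
      simp only [Nat.choose_one_right] at hFp
      simp only [Nat.choose_one_right] at hFp ⊢ 
      rw [hFp, hGsum]
      have : Nat.choose 2 1 = 2 := rfl
      omega
    | 2 =>
      rw [hFp]
      have h2 : Nat.choose 2 2 = 1 := rfl
      have h1 : Nat.choose 1 2 = 0 := rfl
      rw [h2, h1]
      have hpascal : n.choose 2 = (n-1) + (n-1).choose 2 := by
        obtain ⟨k, rfl⟩ : ∃ k, n = k + 1 := ⟨n - 1, by omega⟩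
        simp only [Nat.add_sub_cancel]
        rw [Nat.choose_succ_succ k 1, Nat.choose_one_right]
      have hle := aux_sum_choose_two hfree
      rcases Nat.mod_two_eq_zero_or_one (n-1) with he | he
      · rw [he]; omega
      · -- strict case
        by_cases hall : ∀ x y : Fin n, x ≠ y → ∃ v, G.Adj v x ∧ G.Adj v y
        · exfalso
          have hmin := aux_min_edges (by omega) hall
          omega
        · have := aux_sum_choose_two_strict hfree hall
          rw [he]
          omega
    | (q+3) =>
      rw [hFp]
      have h2 : Nat.choose 2 (q+3) = 0 := Nat.choose_eq_zero_of_lt (by omega)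
      have h1 : Nat.choose 1 (q+3) = 0 := Nat.choose_eq_zero_of_lt (by omega)
      rw [h2, h1]
      simp only [Nat.mul_zero, Nat.add_zero]
      exact aux_sum_choose_p hfree (by omega) hn hGsum3
  -- assemble via the binomial basis
  have expand : ∀ (H : SimpleGraph (Fin n)) (_ : DecidableRel H.Adj),
      degPow H r = ∑ p ∈ Finset.range (r+1), auxA r p * ∑ v : Fin n, (H.degree v).choose p := by
    intro H instH
    calc degPow H r = ∑ v : Fin n, (H.degree v) ^ r := by
          refine Finset.sum_congr rfl fun v _ => ?_
          rw [aux_ncard_deg]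
      _ = ∑ v : Fin n, ∑ p ∈ Finset.range (r+1), auxA r p * (H.degree v).choose p :=
          Finset.sum_congr rfl fun v _ => aux_pow_eq_sum_choose r (H.degree v)
      _ = ∑ p ∈ Finset.range (r+1), ∑ v : Fin n, auxA r p * (H.degree v).choose p :=
          Finset.sum_comm
      _ = ∑ p ∈ Finset.range (r+1), auxA r p * ∑ v : Fin n, (H.degree v).choose p := by
          refine Finset.sum_congr rfl fun p _ => ?_
          rw [Finset.mul_sum]
  rw [expand G ‹_›, expand (friendshipGraph n) ‹_›]
  exact Finset.sum_le_sum fun p _ => Nat.mul_le_mul_left _ (key p)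
end

section
/- Let 2 ≤ s ≤ t be integers and let G_0 be a graph with girth at least 5 in which every vertex has degree at most t − 1. Then the join of the complete graph K_{s−1} with G_0 contains no subgraph isomorphic to the complete bipartite graph K_{s,t}. -/
open Finset

/-- The join of two graphs: their disjoint union together with all edges between them. -/
def joinGraph {α β : Type*} (G : SimpleGraph α) (H : SimpleGraph β) : SimpleGraph (α ⊕ β) :=
  mkGraph (fun v w =>
    (∃ a b, v = Sum.inl a ∧ w = Sum.inl b ∧ G.Adj a b) ∨
    (∃ a b, v = Sum.inr a ∧ w = Sum.inr b ∧ H.Adj a b) ∨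
    (v.isLeft = true ∧ w.isRight = true))

open Sum in
lemma no_C4 {β : Type*} (G : SimpleGraph β) (h : 5 ≤ G.egirth) {a₁ a₂ b₁ b₂ : β}
    (ha : a₁ ≠ a₂) (hb : b₁ ≠ b₂) (h11 : G.Adj a₁ b₁) (h12 : G.Adj a₁ b₂)
    (h21 : G.Adj a₂ b₁) (h22 : G.Adj a₂ b₂) : False := by
  set w : G.Walk a₁ a₁ :=
    SimpleGraph.Walk.cons h11 (SimpleGraph.Walk.cons h21.symm
      (SimpleGraph.Walk.cons h22 (SimpleGraph.Walk.cons h12.symm SimpleGraph.Walk.nil)))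
    with hw
  have hc : w.IsCycle := by
    rw [SimpleGraph.Walk.isCycle_def]
    refine ⟨⟨?_⟩, by simp [hw], ?_⟩
    · simp only [hw, SimpleGraph.Walk.edges_cons, SimpleGraph.Walk.edges_nil,
        List.nodup_cons, List.mem_cons, List.not_mem_nil]
      simp [Sym2.eq, Sym2.rel_iff', Prod.mk.injEq, Prod.swap_prod_mk, ha, hb, ha.symm,
        hb.symm, h11.ne, h12.ne, h21.ne, h22.ne, h11.ne', h12.ne', h21.ne', h22.ne']
    · simp only [hw, SimpleGraph.Walk.support_cons, SimpleGraph.Walk.support_nil,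
        List.tail_cons, List.nodup_cons, List.mem_cons, List.not_mem_nil]
      simp [ha, hb, ha.symm, hb.symm, h11.ne, h12.ne, h21.ne, h22.ne,
        h11.ne', h12.ne', h21.ne', h22.ne']
  have h4 : w.length = 4 := by simp [hw]
  have := SimpleGraph.le_egirth.mp h _ w hc
  rw [h4] at this
  norm_num at this

/-- For `2 ≤ s ≤ t`, if `G₀` has girth at least 5 and maximum degree
at most `t − 1`, then the join `K_{s−1} ∗ G₀` contains no copy of `K_{s,t}`. -/
theorem stmt_18 {β : Type*} [Fintype β] (s t : ℕ) (hs : 2 ≤ s) (hst : s ≤ t)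
    (G₀ : SimpleGraph β) (hgirth : 5 ≤ G₀.egirth)
    (hdeg : ∀ v, (G₀.neighborSet v).ncard ≤ t - 1) :
    ¬ Contains (completeBipartiteGraph (Fin s) (Fin t))
        (joinGraph (SimpleGraph.completeGraph (Fin (s - 1))) G₀) := by
  classical
  rintro ⟨f, hf⟩
  have key : ∀ (i : Fin s) (j : Fin t) (a b : β),
      f (Sum.inl i) = Sum.inr a → f (Sum.inr j) = Sum.inr b → G₀.Adj a b := by
    intro i j a b hi hj
    have hadj := hf (Sum.inl i) (Sum.inr j) (by simp [completeBipartiteGraph])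
    rw [hi, hj] at hadj
    obtain ⟨hne, hor⟩ := hadj
    have : G₀.Adj a b ∨ G₀.Adj b a := by
      rcases hor with h | h <;>
        rcases h with ⟨a', b', h1, h2, h3⟩ | ⟨a', b', h1, h2, h3⟩ | ⟨h1, h2⟩ <;> simp_all
    exact this.elim id fun h => h.symm
  -- the set of vertices mapped to the left part
  set L : Finset (Fin s ⊕ Fin t) := Finset.univ.filter (fun x => (f x).isLeft) with hL
  have h0 : 0 < s - 1 := by omega
  have hLcard : L.card ≤ s - 1 := by
    have hcard := Finset.card_le_card_of_injOn (s := L) (t := Finset.univ)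
        (fun x => Sum.elim id (fun _ : β => (⟨0, h0⟩ : Fin (s - 1))) (f x))
        (fun x _ => Finset.mem_univ _) ?_
    · simpa using hcard
    · intro x hx y hy hxy
      simp only [hL, Finset.mem_coe, Finset.mem_filter] at hx hy
      obtain ⟨cx, hcx⟩ := Sum.isLeft_iff.mp hx.2
      obtain ⟨cy, hcy⟩ := Sum.isLeft_iff.mp hy.2
      apply f.injective
      simp only [hcx, hcy] at hxy ⊢
      simpa using hxy
  set AR : Finset (Fin s) := Finset.univ.filter (fun i => (f (Sum.inl i)).isRight) with hAR
  set BR : Finset (Fin t) := Finset.univ.filter (fun j => (f (Sum.inr j)).isRight) with hBR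
  have hALeq : L.toLeft = Finset.univ.filter (fun i : Fin s => ¬ (f (Sum.inl i)).isRight) := by
    ext i; simp [hL, Sum.not_isRight]
  have hBLeq : L.toRight = Finset.univ.filter (fun j : Fin t => ¬ (f (Sum.inr j)).isRight) := by
    ext j; simp [hL, Sum.not_isRight]
  have hsum : L.toLeft.card + L.toRight.card = L.card := Finset.card_toLeft_add_card_toRight
  have hAsum : AR.card + L.toLeft.card = s := by
    rw [hALeq, hAR]
    rw [Finset.card_filter_add_card_filter_not]
    simp
  have hBsum : BR.card + L.toRight.card = t := by
    rw [hBLeq, hBR]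
    rw [Finset.card_filter_add_card_filter_not]
    simp
  -- degree facts
  have degA : ∀ (i : Fin s) (a : β), f (Sum.inl i) = Sum.inr a →
      BR.card ≤ (G₀.neighborSet a).ncard := by
    intro i a hi
    rw [Set.ncard_eq_toFinset_card']
    refine Finset.card_le_card_of_injOn (fun j => Sum.elim (fun _ => a) id (f (Sum.inr j)))
      ?_ ?_
    · intro j hj
      simp only [hBR, Finset.mem_coe, Finset.mem_filter] at hj
      obtain ⟨b, hb⟩ := Sum.isRight_iff.mp hj.2
      simp only [hb]
      simpa using key i j a b hi hb
    · intro j₁ h1 j₂ h2 heq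
      simp only [hBR, Finset.mem_coe, Finset.mem_filter] at h1 h2
      obtain ⟨b₁, hb₁⟩ := Sum.isRight_iff.mp h1.2
      obtain ⟨b₂, hb₂⟩ := Sum.isRight_iff.mp h2.2
      have : f (Sum.inr j₁) = f (Sum.inr j₂) := by
        simp only [hb₁, hb₂] at heq ⊢; simpa using heq
      simpa using f.injective this
  have degB : ∀ (j : Fin t) (b : β), f (Sum.inr j) = Sum.inr b →
      AR.card ≤ (G₀.neighborSet b).ncard := by
    intro j b hj
    rw [Set.ncard_eq_toFinset_card']
    refine Finset.card_le_card_of_injOn (fun i => Sum.elim (fun _ => b) id (f (Sum.inl i)))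
      ?_ ?_
    · intro i hi
      simp only [hAR, Finset.mem_coe, Finset.mem_filter] at hi
      obtain ⟨a, ha⟩ := Sum.isRight_iff.mp hi.2
      simp only [ha]
      simpa using (key i j a b ha hj).symm
    · intro i₁ h1 i₂ h2 heq
      simp only [hAR, Finset.mem_coe, Finset.mem_filter] at h1 h2
      obtain ⟨a₁, ha₁⟩ := Sum.isRight_iff.mp h1.2
      obtain ⟨a₂, ha₂⟩ := Sum.isRight_iff.mp h2.2
      have : f (Sum.inl i₁) = f (Sum.inl i₂) := by
        simp only [ha₁, ha₂] at heq ⊢; simpa using heq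
      simpa using f.injective this
  have hk1 : 1 ≤ AR.card := by omega
  have hm1 : 1 ≤ BR.card := by
    have : AR.card ≤ s := by
      have := Finset.card_le_card (Finset.subset_univ AR); simpa using this
    omega
  by_cases hk2 : 2 ≤ AR.card
  · by_cases hm2 : 2 ≤ BR.card
    · -- four-cycle case
      obtain ⟨i₁, hi₁, i₂, hi₂, hii⟩ := Finset.one_lt_card.mp hk2
      obtain ⟨j₁, hj₁, j₂, hj₂, hjj⟩ := Finset.one_lt_card.mp hm2
      simp only [hAR, Finset.mem_filter] at hi₁ hi₂
      simp only [hBR, Finset.mem_filter] at hj₁ hj₂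
      obtain ⟨a₁, ha₁⟩ := Sum.isRight_iff.mp hi₁.2
      obtain ⟨a₂, ha₂⟩ := Sum.isRight_iff.mp hi₂.2
      obtain ⟨b₁, hb₁⟩ := Sum.isRight_iff.mp hj₁.2
      obtain ⟨b₂, hb₂⟩ := Sum.isRight_iff.mp hj₂.2
      have hane : a₁ ≠ a₂ := by
        intro h; apply hii
        have : f (Sum.inl i₁) = f (Sum.inl i₂) := by rw [ha₁, ha₂, h]
        simpa using f.injective this
      have hbne : b₁ ≠ b₂ := by
        intro h; apply hjj
        have : f (Sum.inr j₁) = f (Sum.inr j₂) := by rw [hb₁, hb₂, h]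
        simpa using f.injective this
      exact no_C4 G₀ hgirth hane hbne (key i₁ j₁ a₁ b₁ ha₁ hb₁) (key i₁ j₂ a₁ b₂ ha₁ hb₂)
        (key i₂ j₁ a₂ b₁ ha₂ hb₁) (key i₂ j₂ a₂ b₂ ha₂ hb₂)
    · -- BR.card = 1, so AR.card ≥ t : single b has degree ≥ t
      obtain ⟨j₀, hj₀⟩ := Finset.card_pos.mp (by omega : 0 < BR.card)
      simp only [hBR, Finset.mem_filter] at hj₀
      obtain ⟨b₀, hb₀⟩ := Sum.isRight_iff.mp hj₀.2
      have := degB j₀ b₀ hb₀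
      have := hdeg b₀
      omega
  · -- AR.card = 1, so BR.card ≥ t : single a has degree ≥ t
    obtain ⟨i₀, hi₀⟩ := Finset.card_pos.mp (by omega : 0 < AR.card)
    simp only [hAR, Finset.mem_filter] at hi₀
    obtain ⟨a₀, ha₀⟩ := Sum.isRight_iff.mp hi₀.2
    have := degA i₀ a₀ ha₀
    have := hdeg a₀
    omega
end
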